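/- arXiv:2509.16672 — 8 statements merged into one kernel-verified Lean document; each statement's English description precedes it below -/
import Mathlib

section
/- Let s, t ∈ ℂ with |s| > |t|. Then for all z, w ∈ ℂ, |K^{(s,t)}(z,w)| ≤ C · exp[ (|s|²+1)(|z|²+|w|²)/(3|s|²−|t|²+1) − (|s|²−|t|²−1)·Re(s·conj(z)·w)/(|s|²·(3|s|²−|t|²+1)) ], where C = |s|^{−1/2}·(2|s|/√(4|s|²−|t|²))^{2(4|s|²−|t|²)/(3|s|²−|t|²+1)} (and C ≥ |s|^{−1/2}). -/
open MeasureTheory Real Filter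

/-- Principal branch of the complex square root. -/
noncomputable def csqrt (z : ℂ) : ℂ := z ^ ((1 : ℂ) / 2)

/-- The canonical integral kernel `K^{(s,t)}(z,w)`. -/
noncomputable def Kst (s t z w : ℂ) : ℂ :=
  (csqrt s)⁻¹ *
    Complex.exp ((t * z ^ 2 - (starRingEnd ℂ) t * ((starRingEnd ℂ) w) ^ 2
      + 2 * z * (starRingEnd ℂ) w) / (2 * s))


lemma aux_sq (a b : ℝ) (hb : 0 ≤ b) (hba : b < a) :
    ((3*a^2 - b^2 + 1) * b)^2 ≤ 4 * ((a*(a-1)^2 + b^2) * (a*(a+1)^2 - b^2)) := by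
  nlinarith [mul_nonneg (sq_nonneg (b^2 - a^2 + 1)) (show (0:ℝ) ≤ 4*a^2 - b^2 by nlinarith)]

lemma aux_amgm (P Q c x y : ℝ) (hP : 0 ≤ P) (hQ : 0 ≤ Q) (hc : 0 ≤ c)
    (h : c^2 ≤ 4*(P*Q)) (hx : 0 ≤ x) (hy : 0 ≤ y) : c*(x*y) ≤ P*x^2 + Q*y^2 := by
  have h1 : (c*(x*y))^2 ≤ (P*x^2 + Q*y^2)^2 := by
    nlinarith [sq_nonneg (P*x^2 - Q*y^2), mul_le_mul_of_nonneg_right h (sq_nonneg (x*y))]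
  exact (pow_le_pow_iff_left₀ (by positivity) (by positivity) two_ne_zero).mp h1

lemma aux_core (a : ℝ) (ha : 0 < a) (b x y : ℝ) (hb : 0 ≤ b) (hba : b < a)
    (hx : 0 ≤ x) (hy : 0 ≤ y) :
    (3*a^2 - b^2 + 1) * (b * (x*y)) ≤ (a*(a-1)^2 + b^2) * x^2 + (a*(a+1)^2 - b^2) * y^2 := by
  have hba2 : b^2 ≤ a^2 := by nlinarith
  have hQ : 0 ≤ a*(a+1)^2 - b^2 := by nlinarith [mul_nonneg ha.le (sq_nonneg (a+1)), sq_nonneg a, mul_pos ha ha, mul_pos (mul_pos ha ha) ha]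
  have hc : 0 ≤ (3*a^2 - b^2 + 1)*b := by nlinarith
  have h := aux_amgm (a*(a-1)^2 + b^2) (a*(a+1)^2 - b^2) ((3*a^2 - b^2 + 1)*b) x y
    (by positivity) hQ hc (aux_sq a b hb hba) hx hy
  linarith [h]

lemma lemA (a : ℝ) (ha : 0 < a) (t z w : ℂ) (hb : ‖t‖ < a) :
    ((t * z ^ 2 - (starRingEnd ℂ) t * ((starRingEnd ℂ) w) ^ 2 + 2 * z * (starRingEnd ℂ) w) / (2*(a:ℂ))).re ≤
      (a ^ 2 + 1) * (‖z‖ ^ 2 + ‖w‖ ^ 2) / (3 * a ^ 2 - ‖t‖ ^ 2 + 1)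
        - (a ^ 2 - ‖t‖ ^ 2 - 1) * ((a:ℂ) * (starRingEnd ℂ) z * w).re /
            (a ^ 2 * (3 * a ^ 2 - ‖t‖ ^ 2 + 1)) := by
  have hb0 : 0 ≤ ‖t‖ := norm_nonneg t
  have hD : 0 < 3*a^2 - ‖t‖^2 + 1 := by nlinarith
  have hnum : (t * z ^ 2 - (starRingEnd ℂ) t * ((starRingEnd ℂ) w) ^ 2 + 2 * z * (starRingEnd ℂ) w)
      = t*(z+w)*(z-w) + (t*w^2 - (starRingEnd ℂ) (t*w^2)) + ((2:ℝ):ℂ)*(z*(starRingEnd ℂ) w) := by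
    rw [map_mul, map_pow]; push_cast; ring
  have hre0 : (t * z ^ 2 - (starRingEnd ℂ) t * ((starRingEnd ℂ) w) ^ 2 + 2 * z * (starRingEnd ℂ) w).re
      = (t*(z+w)*(z-w)).re + 2*(z*(starRingEnd ℂ) w).re := by
    rw [hnum, Complex.add_re, Complex.add_re, Complex.sub_re, Complex.conj_re, Complex.re_ofReal_mul]; ring
  have hdiv : ((t * z ^ 2 - (starRingEnd ℂ) t * ((starRingEnd ℂ) w) ^ 2 + 2 * z * (starRingEnd ℂ) w) / (2*(a:ℂ))).re
      = ((t*(z+w)*(z-w)).re + 2*(z*(starRingEnd ℂ) w).re) / (2*a) := by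
    rw [show (2*(a:ℂ)) = ((2*a : ℝ):ℂ) by push_cast; ring, Complex.div_ofReal_re, hre0]
  have hsum : ‖z‖^2 + ‖w‖^2 = (‖z+w‖^2 + ‖z-w‖^2)/2 := by
    simp only [Complex.sq_norm]
    linarith [Complex.normSq_add z w, Complex.normSq_sub z w]
  have hR : (z * (starRingEnd ℂ) w).re = (‖z+w‖^2 - ‖z-w‖^2)/4 := by
    simp only [Complex.sq_norm]
    linarith [Complex.normSq_add z w, Complex.normSq_sub z w]
  have hR' : ((starRingEnd ℂ) z * w).re = (z * (starRingEnd ℂ) w).re := by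
    rw [← Complex.conj_re ((starRingEnd ℂ) z * w), map_mul, Complex.conj_conj]
  have hTz : (t*(z+w)*(z-w)).re ≤ ‖t‖ * (‖z+w‖ * ‖z-w‖) := by
    calc (t*(z+w)*(z-w)).re ≤ ‖t*(z+w)*(z-w)‖ := Complex.re_le_norm _
    _ = ‖t‖ * (‖z+w‖ * ‖z-w‖) := by rw [norm_mul, norm_mul]; ring
  have haw : ((a:ℂ) * (starRingEnd ℂ) z * w).re = a * ((starRingEnd ℂ) z * w).re := by
    rw [mul_assoc, Complex.re_ofReal_mul]
  set b := ‖t‖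
  set x := ‖z+w‖
  set y := ‖z-w‖
  set T := (t*(z+w)*(z-w)).re
  have hx : 0 ≤ x := norm_nonneg _
  have hy : 0 ≤ y := norm_nonneg _
  have hcore := aux_core a ha b x y hb0 hb hx hy
  rw [hdiv, hsum, haw, hR', hR]
  rw [div_le_iff₀ (by positivity : (0:ℝ) < 2*a)]
  have hkey : 2*(3*a^2 - b^2 + 1)*T ≤ 2*((a*(a-1)^2 + b^2) * x^2 + (a*(a+1)^2 - b^2) * y^2) := by
    nlinarith [mul_le_mul_of_nonneg_left hTz (by positivity : (0:ℝ) ≤ 2*(3*a^2 - b^2 + 1))]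
  have hexp : ((a ^ 2 + 1) * ((x^2 + y^2)/2) / (3 * a ^ 2 - b ^ 2 + 1)
        - (a ^ 2 - b ^ 2 - 1) * (a * ((x^2 - y^2)/4)) / (a ^ 2 * (3 * a ^ 2 - b ^ 2 + 1))) * (2*a)
      = (T + 2*((x^2 - y^2)/4))
        + ((2*((a*(a-1)^2 + b^2) * x^2 + (a*(a+1)^2 - b^2) * y^2) - 2*(3*a^2 - b^2 + 1)*T))/(2*(3*a^2-b^2+1)) := by
    have hD' : 3*a^2 - b^2 + 1 ≠ 0 := hD.ne'
    rw [div_sub_div _ _ hD' (by positivity), div_mul_eq_mul_div, add_div' _ _ _ (by positivity), div_eq_div_iff (by positivity) (by positivity)]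
    ring
  rw [hexp]
  have : 0 ≤ ((2*((a*(a-1)^2 + b^2) * x^2 + (a*(a+1)^2 - b^2) * y^2) - 2*(3*a^2 - b^2 + 1)*T))/(2*(3*a^2-b^2+1)) := by
    apply div_nonneg (by linarith) (by positivity)
  linarith

set_option maxHeartbeats 1000000 in
theorem stmt0 (s t : ℂ) (hst : ‖t‖ < ‖s‖) (C : ℝ)
    (hC : C = (‖s‖) ^ (-(1 : ℝ) / 2) *
      (2 * ‖s‖ / Real.sqrt (4 * ‖s‖ ^ 2 - ‖t‖ ^ 2)) ^
        (2 * (4 * ‖s‖ ^ 2 - ‖t‖ ^ 2) /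
          (3 * ‖s‖ ^ 2 - ‖t‖ ^ 2 + 1))) :
    (∀ z w : ℂ,
      ‖Kst s t z w‖ ≤
        C * Real.exp ((‖s‖ ^ 2 + 1) * (‖z‖ ^ 2 + ‖w‖ ^ 2) /
            (3 * ‖s‖ ^ 2 - ‖t‖ ^ 2 + 1)
          - (‖s‖ ^ 2 - ‖t‖ ^ 2 - 1) * (s * (starRingEnd ℂ) z * w).re /
            (‖s‖ ^ 2 * (3 * ‖s‖ ^ 2 - ‖t‖ ^ 2 + 1)))) ∧
    (‖s‖) ^ (-(1 : ℝ) / 2) ≤ C := by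
  have hb0 : 0 ≤ ‖t‖ := norm_nonneg t
  have ha : 0 < ‖s‖ := lt_of_le_of_lt hb0 hst
  have hs : s ≠ 0 := by simpa using ha.ne'
  set a := ‖s‖ with hadef
  set b := ‖t‖ with hbdef
  have hba2 : b^2 < a^2 := by nlinarith
  -- second conjunct
  have hCge : a ^ (-(1 : ℝ) / 2) ≤ C := by
    rw [hC]
    apply le_mul_of_one_le_right (by positivity)
    have h4ab : (0:ℝ) < 4*a^2 - b^2 := by nlinarith
    apply Real.one_le_rpow
    · rw [le_div_iff₀ (Real.sqrt_pos.mpr h4ab), one_mul]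
      calc Real.sqrt (4*a^2 - b^2) ≤ Real.sqrt ((2*a)^2) := by
            apply Real.sqrt_le_sqrt; nlinarith
        _ = 2*a := Real.sqrt_sq (by positivity)
    · apply div_nonneg (by nlinarith) (by nlinarith)
  refine ⟨fun z w => ?_, hCge⟩
  -- square root of the phase of s
  set ρ : ℂ := Complex.exp ((s.arg/2 : ℝ) * Complex.I) with hρdef
  have hρ2 : (a:ℂ) * ρ^2 = s := by
    have h := Complex.norm_mul_exp_arg_mul_I s
    rw [← hadef] at h
    rw [← h]
    congr 1
    rw [hρdef, sq, ← Complex.exp_add]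
    congr 1
    push_cast
    ring
  have hρa : ‖ρ‖ = 1 := by
    rw [hρdef, Complex.norm_exp]
    simp
  have hρ0 : ρ ≠ 0 := Complex.exp_ne_zero _
  have hcρ : (starRingEnd ℂ) ρ = ρ⁻¹ := (Complex.inv_eq_conj hρa).symm
  -- |Kst| computation
  have habsK : ‖Kst s t z w‖ = a ^ (-(1:ℝ)/2) *
      Real.exp (((t * z ^ 2 - (starRingEnd ℂ) t * ((starRingEnd ℂ) w) ^ 2
        + 2 * z * (starRingEnd ℂ) w) / (2 * s)).re) := by
    rw [Kst, norm_mul, norm_inv, Complex.norm_exp, csqrt, Complex.norm_cpow_of_ne_zero hs]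
    have h1 : ((1:ℂ)/2).re = (1:ℝ)/2 := by norm_num
    have h2 : ((1:ℂ)/2).im = 0 := by norm_num
    rw [h1, h2]
    rw [mul_zero, Real.exp_zero, div_one, ← Real.rpow_neg ha.le]
    norm_num
  rw [habsK]
  -- exponent bound via substitution to real s
  have hzw : (t * z ^ 2 - (starRingEnd ℂ) t * ((starRingEnd ℂ) w) ^ 2 + 2 * z * (starRingEnd ℂ) w) / (2 * s)
      = (t * (z/ρ) ^ 2 - (starRingEnd ℂ) t * ((starRingEnd ℂ) (ρ*w)) ^ 2
        + 2 * (z/ρ) * (starRingEnd ℂ) (ρ*w)) / (2*(a:ℂ)) := by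
    have h2s : (2*s) = (2*(a:ℂ)) * ρ^2 := by rw [← hρ2]; ring
    rw [map_mul, hcρ, h2s]
    have haC : ((a:ℝ):ℂ) ≠ 0 := Complex.ofReal_ne_zero.mpr ha.ne'
    field_simp [hρ0, haC]
  have hsz : ((a:ℂ) * (starRingEnd ℂ) (z/ρ) * (ρ*w)) = s * (starRingEnd ℂ) z * w := by
    rw [map_div₀, hcρ, ← hρ2]
    field_simp [hρ0]
  have habs1 : ‖z/ρ‖ = ‖z‖ := by rw [norm_div, hρa, div_one]
  have habs2 : ‖ρ*w‖ = ‖w‖ := by rw [norm_mul, hρa, one_mul]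
  have hmain := lemA a ha t (z/ρ) (ρ*w) hst
  rw [hsz, habs1, habs2] at hmain
  rw [hzw]
  refine le_trans (mul_le_mul_of_nonneg_left (Real.exp_le_exp.mpr hmain) ?_)
    (mul_le_mul_of_nonneg_right hCge (Real.exp_pos _).le)
  positivity
end

section
/- Let s, t ∈ ℂ with |s| > |t|. Then for all z, w ∈ ℂ, e^{−(|z|²+|w|²)/2}·|K^{(s,t)}(z,w)| ≤ C · exp[ −((|s|²−|t|²−1)/(2|s|²·(3|s|²−|t|²+1)))·( |s|²·(|z|²+|w|²) + 2·Re(s·conj(z)·w) ) ]. If moreover |s|² ≥ |t|² + 1, then also e^{−(|z|²+|w|²)/2}·|K^{(s,t)}(z,w)| ≤ C · exp[ −((|s|²−|t|²−1)/(2|s|²·(3|s|²−|t|²+1)))·|z + s·w|² ] for all z, w ∈ ℂ. -/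
open MeasureTheory Real Filter

lemma D_sq (s z w : ℂ) :
    ‖(starRingEnd ℂ) s * z ^ 2 - s * w ^ 2‖^2
      = ‖s‖^2 * (‖z‖^2 + ‖w‖^2)^2
        - 4 * ((s * (starRingEnd ℂ) z * w).re)^2 := by
  simp only [Complex.sq_norm]
  simp only [Complex.normSq_apply, Complex.mul_re, Complex.mul_im, Complex.sub_re, Complex.sub_im,
    Complex.conj_re, Complex.conj_im, pow_two]
  ring

lemma abs_csqrt_inv (s : ℂ) : ‖(csqrt s)⁻¹‖ = ‖s‖ ^ (-(1:ℝ)/2) := by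
  rw [csqrt, norm_inv, show ((1:ℂ)/2) = (((1/2:ℝ)):ℂ) by norm_num, Complex.norm_cpow_real,
    show (-(1:ℝ)/2) = -(1/2:ℝ) by norm_num, Real.rpow_neg (norm_nonneg s)]

-- real part of the exponent, split and bounded
lemma re_exponent_le (s t z w : ℂ) (hs : s ≠ 0) :
    ((t * z ^ 2 - (starRingEnd ℂ) t * ((starRingEnd ℂ) w) ^ 2
      + 2 * z * (starRingEnd ℂ) w) / (2 * s)).re ≤
    ‖t‖ / (2 * ‖s‖^2) *
      ‖(starRingEnd ℂ) s * z ^ 2 - s * w ^ 2‖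
    + (s * (starRingEnd ℂ) z * w).re / ‖s‖^2 := by
  have hcs : (starRingEnd ℂ) s ≠ 0 := by simpa using hs
  have hsc : (((‖s‖^2 : ℝ)) : ℂ) = s * (starRingEnd ℂ) s := by
    rw [Complex.mul_conj, Complex.sq_norm]
  -- split
  have hsplit : (t * z ^ 2 - (starRingEnd ℂ) t * ((starRingEnd ℂ) w) ^ 2
      + 2 * z * (starRingEnd ℂ) w) / (2 * s)
      = (t * z ^ 2 - (starRingEnd ℂ) t * ((starRingEnd ℂ) w) ^ 2) / (2 * s)
        + (2 * z * (starRingEnd ℂ) w) / (2 * s) := by ring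
  rw [hsplit, Complex.add_re]
  have hH : ((2 * z * (starRingEnd ℂ) w) / (2 * s)).re
      = (s * (starRingEnd ℂ) z * w).re / ‖s‖^2 := by
    have h1 : (2 * z * (starRingEnd ℂ) w) / (2 * s)
        = ((starRingEnd ℂ) s * z * (starRingEnd ℂ) w) / (((‖s‖^2 : ℝ)) : ℂ) := by
      rw [hsc]; field_simp
    rw [h1, Complex.div_ofReal_re,
      show (starRingEnd ℂ) s * z * (starRingEnd ℂ) w = (starRingEnd ℂ) (s * (starRingEnd ℂ) z * w) by
        simp [map_mul],
      Complex.conj_re]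
  rw [hH]
  have hF : ((t * z ^ 2 - (starRingEnd ℂ) t * ((starRingEnd ℂ) w) ^ 2) / (2 * s)).re
      = (t * ((starRingEnd ℂ) s * z ^ 2 - s * w ^ 2) / (2 * (s * (starRingEnd ℂ) s))).re := by
    have e1 : (t * z ^ 2 - (starRingEnd ℂ) t * ((starRingEnd ℂ) w) ^ 2) / (2 * s)
        = t * z^2 / (2*s) + (-((starRingEnd ℂ) t * ((starRingEnd ℂ) w)^2)) / (2*s) := by ring
    have e2 : ((-((starRingEnd ℂ) t * ((starRingEnd ℂ) w)^2)) / (2*s)).re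
        = ((-(t * w^2)) / (2 * (starRingEnd ℂ) s)).re := by
      rw [show ((-(t * w^2)) / (2 * (starRingEnd ℂ) s))
          = (starRingEnd ℂ) ((-((starRingEnd ℂ) t * ((starRingEnd ℂ) w)^2)) / (2*s)) by
        simp [map_div₀, map_mul, map_neg, map_pow, map_ofNat], Complex.conj_re]
    have e3 : t * z^2 / (2*s) + (-(t * w^2)) / (2 * (starRingEnd ℂ) s)
        = t * ((starRingEnd ℂ) s * z ^ 2 - s * w ^ 2) / (2 * (s * (starRingEnd ℂ) s)) := by
      field_simp; ring
    rw [e1, Complex.add_re, e2, ← Complex.add_re, e3]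
  rw [hF]
  have hle := Complex.re_le_norm (t * ((starRingEnd ℂ) s * z ^ 2 - s * w ^ 2) / (2 * (s * (starRingEnd ℂ) s)))
  have habs : ‖t * ((starRingEnd ℂ) s * z ^ 2 - s * w ^ 2) / (2 * (s * (starRingEnd ℂ) s))‖
      = ‖t‖ / (2 * ‖s‖^2) *
        ‖(starRingEnd ℂ) s * z ^ 2 - s * w ^ 2‖ := by
    rw [norm_div, norm_mul, norm_mul, Complex.norm_two, norm_mul, Complex.norm_conj]
    ring
  linarith [hle, le_of_eq habs]

set_option maxHeartbeats 1000000 in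
lemma key_ineq (a b u r : ℝ) (ha : 0 < a) (hb : 0 ≤ b) (hba : b < a) (hu : 0 ≤ u)
    (hr : |r| ≤ a * u / 2) :
    -u/2 + b/(2*a^2) * Real.sqrt (a^2*u^2 - 4*r^2) + r/a^2 ≤
      -((a^2-b^2-1)/(2*a^2*(3*a^2-b^2+1))) * (a^2*u + 2*r) := by
  have hb2 : b^2 < a^2 := by nlinarith
  have hN : 0 < 3*a^2-b^2+1 := by nlinarith
  have ha2 : 0 < a^2 := by positivity
  have h2ab : 0 < 2*a^2 - b^2 := by nlinarith
  have h4ab : (0:ℝ) ≤ 4*a^2 - b^2 := by nlinarith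
  obtain ⟨hr1, hr2⟩ := abs_le.mp hr
  have hS0 : 0 ≤ a^2*u^2 - 4*r^2 := by nlinarith
  set S := Real.sqrt (a^2*u^2 - 4*r^2) with hSdef
  have hS2 : S^2 = a^2*u^2 - 4*r^2 := Real.sq_sqrt hS0
  have hSnn : 0 ≤ S := Real.sqrt_nonneg _
  have hQ : 0 ≤ a^2*(a^2+1)*u - 2*(2*a^2-b^2)*r := by
    nlinarith [mul_le_mul_of_nonneg_left hr2 (by nlinarith : (0:ℝ) ≤ 2*(2*a^2-b^2)),
      mul_nonneg (mul_nonneg (sq_nonneg a) hu) (sq_nonneg (a-1)),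
      mul_nonneg (mul_nonneg ha.le hu) (sq_nonneg b)]
  have hA : 0 < 4*a^4*(a^2+1)^2 - a^2*b^2*(3*a^2-b^2+1)^2 := by
    have h1 : 0 ≤ a^2*(4*a^2-b^2)*(a^2-b^2-1)^2 :=
      mul_nonneg (mul_nonneg (sq_nonneg a) h4ab) (sq_nonneg _)
    have h2 : 0 < a^2*(2*a^2-b^2)^2 := mul_pos ha2 (pow_pos h2ab 2)
    nlinarith [h1, h2]
  have hpoly : (b*(3*a^2-b^2+1)*S)^2 ≤ (2*(a^2*(a^2+1)*u - 2*(2*a^2-b^2)*r))^2 := by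
    have hid : 4*(4*a^4*(a^2+1)^2 - a^2*b^2*(3*a^2-b^2+1)^2) *
        ((2*(a^2*(a^2+1)*u - 2*(2*a^2-b^2)*r))^2 - (b*(3*a^2-b^2+1))^2*(a^2*u^2-4*r^2))
        = (2*(4*a^4*(a^2+1)^2 - a^2*b^2*(3*a^2-b^2+1)^2)*u - 16*a^2*(a^2+1)*(2*a^2-b^2)*r)^2
          + 16*a^2*b^2*(3*a^2-b^2+1)^2*(4*a^2-b^2)*((a^2-b^2-1)*r)^2 := by ring
    have hterm : 0 ≤ 16*a^2*b^2*(3*a^2-b^2+1)^2*(4*a^2-b^2)*((a^2-b^2-1)*r)^2 :=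
      mul_nonneg (mul_nonneg (by positivity) h4ab) (sq_nonneg _)
    have hsum : 0 ≤ 4*(4*a^4*(a^2+1)^2 - a^2*b^2*(3*a^2-b^2+1)^2) *
        ((2*(a^2*(a^2+1)*u - 2*(2*a^2-b^2)*r))^2 - (b*(3*a^2-b^2+1))^2*(a^2*u^2-4*r^2)) := by
      rw [hid]
      have := sq_nonneg (2*(4*a^4*(a^2+1)^2 - a^2*b^2*(3*a^2-b^2+1)^2)*u - 16*a^2*(a^2+1)*(2*a^2-b^2)*r)
      linarith
    have hdiff : 0 ≤ (2*(a^2*(a^2+1)*u - 2*(2*a^2-b^2)*r))^2 - (b*(3*a^2-b^2+1))^2*(a^2*u^2-4*r^2) :=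
      nonneg_of_mul_nonneg_right hsum (by linarith)
    calc (b*(3*a^2-b^2+1)*S)^2 = (b*(3*a^2-b^2+1))^2*(a^2*u^2-4*r^2) := by
          rw [mul_pow, hS2]
      _ ≤ _ := by linarith
  have hmain : b*(3*a^2-b^2+1)*S ≤ 2*(a^2*(a^2+1)*u - 2*(2*a^2-b^2)*r) := by
    have h1 : 0 ≤ b*(3*a^2-b^2+1)*S := by positivity
    calc b*(3*a^2-b^2+1)*S = Real.sqrt ((b*(3*a^2-b^2+1)*S)^2) := (Real.sqrt_sq h1).symm
      _ ≤ Real.sqrt ((2*(a^2*(a^2+1)*u - 2*(2*a^2-b^2)*r))^2) := Real.sqrt_le_sqrt hpoly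
      _ = _ := Real.sqrt_sq (by linarith)
  have heq : -((a^2-b^2-1)/(2*a^2*(3*a^2-b^2+1))) * (a^2*u + 2*r)
      - (-u/2 + b/(2*a^2) * S + r/a^2)
      = (2*(a^2*(a^2+1)*u - 2*(2*a^2-b^2)*r) - b*(3*a^2-b^2+1)*S) / (2*a^2*(3*a^2-b^2+1)) := by
    have hN' := hN.ne'
    obtain ⟨N, hNdef⟩ : ∃ N, N = 3*a^2-b^2+1 := ⟨_, rfl⟩
    rw [← hNdef] at hN' ⊢
    field_simp
    subst hNdef
    ring
  have h2 : 0 ≤ (2*(a^2*(a^2+1)*u - 2*(2*a^2-b^2)*r) - b*(3*a^2-b^2+1)*S) / (2*a^2*(3*a^2-b^2+1)) :=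
    div_nonneg (by linarith) (by positivity)
  linarith [heq, h2]

lemma main_bound (s t : ℂ) (hst : ‖t‖ < ‖s‖) (z w : ℂ) :
    Real.exp (-(‖z‖ ^ 2 + ‖w‖ ^ 2) / 2) * ‖Kst s t z w‖ ≤
      (‖s‖) ^ (-(1:ℝ)/2) *
        Real.exp (-((‖s‖ ^ 2 - ‖t‖ ^ 2 - 1) /
            (2 * ‖s‖ ^ 2 * (3 * ‖s‖ ^ 2 - ‖t‖ ^ 2 + 1))) *
          (‖s‖ ^ 2 * (‖z‖ ^ 2 + ‖w‖ ^ 2)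
            + 2 * (s * (starRingEnd ℂ) z * w).re)) := by
  have ha : 0 < ‖s‖ := (norm_nonneg t).trans_lt hst
  have hs : s ≠ 0 := by
    intro h; rw [h] at ha; simp at ha
  set a := ‖s‖
  set b := ‖t‖
  set x := ‖z‖
  set y := ‖w‖
  set r := (s * (starRingEnd ℂ) z * w).re with hrdef
  -- |r| ≤ a*(x^2+y^2)/2
  have hrabs : |r| ≤ a * (x^2 + y^2) / 2 := by
    have h1 : |r| ≤ ‖s * (starRingEnd ℂ) z * w‖ := Complex.abs_re_le_norm _
    have h2 : ‖s * (starRingEnd ℂ) z * w‖ = a * x * y := by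
      rw [norm_mul, norm_mul, Complex.norm_conj]
    have h3 : a * x * y ≤ a * (x^2+y^2)/2 := by nlinarith [sq_nonneg (x - y), ha.le]
    calc |r| ≤ a * x * y := h2 ▸ h1
      _ ≤ _ := h3
  -- kernel abs
  have hK : ‖Kst s t z w‖
      = a ^ (-(1:ℝ)/2) * Real.exp (((t * z ^ 2 - (starRingEnd ℂ) t * ((starRingEnd ℂ) w) ^ 2
        + 2 * z * (starRingEnd ℂ) w) / (2 * s)).re) := by
    rw [Kst, norm_mul, abs_csqrt_inv, Complex.norm_exp]
  -- D as sqrt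
  have hD : ‖(starRingEnd ℂ) s * z ^ 2 - s * w ^ 2‖
      = Real.sqrt (a^2*(x^2+y^2)^2 - 4*r^2) := by
    rw [← D_sq s z w, Real.sqrt_sq (norm_nonneg _)]
  -- exponent bound
  have hexp : ((t * z ^ 2 - (starRingEnd ℂ) t * ((starRingEnd ℂ) w) ^ 2
        + 2 * z * (starRingEnd ℂ) w) / (2 * s)).re - (x^2 + y^2)/2 ≤
      -((a ^ 2 - b ^ 2 - 1) / (2 * a ^ 2 * (3 * a ^ 2 - b ^ 2 + 1))) *
        (a ^ 2 * (x ^ 2 + y ^ 2) + 2 * r) := by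
    have h1 := re_exponent_le s t z w hs
    rw [hD] at h1
    have h2 := key_ineq a b (x^2+y^2) r ha (norm_nonneg t) hst (by positivity) hrabs
    have : b / (2 * a ^ 2) = b/(2*a^2) := rfl
    linarith [h1, h2]
  rw [hK, ← mul_assoc, mul_comm (Real.exp _) (a ^ (-(1:ℝ)/2)), mul_assoc, ← Real.exp_add]
  apply mul_le_mul_of_nonneg_left _ (Real.rpow_nonneg ha.le _)
  apply Real.exp_le_exp.mpr
  calc -(x ^ 2 + y ^ 2) / 2 + ((t * z ^ 2 - (starRingEnd ℂ) t * ((starRingEnd ℂ) w) ^ 2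
        + 2 * z * (starRingEnd ℂ) w) / (2 * s)).re
      = ((t * z ^ 2 - (starRingEnd ℂ) t * ((starRingEnd ℂ) w) ^ 2
        + 2 * z * (starRingEnd ℂ) w) / (2 * s)).re - (x^2 + y^2)/2 := by ring
    _ ≤ _ := hexp

lemma abs_add_sq (s z w : ℂ) :
    ‖z + s*w‖^2 = ‖z‖^2 + ‖s‖^2 * ‖w‖^2
      + 2*((s * (starRingEnd ℂ) z * w).re) := by
  simp only [Complex.sq_norm]
  simp only [Complex.normSq_apply, Complex.mul_re, Complex.mul_im, Complex.add_re, Complex.add_im,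
    Complex.conj_re, Complex.conj_im]
  ring

theorem stmt1 (s t : ℂ) (hst : ‖t‖ < ‖s‖) (C : ℝ)
    (hC : C = (‖s‖) ^ (-(1 : ℝ) / 2) *
      (2 * ‖s‖ / Real.sqrt (4 * ‖s‖ ^ 2 - ‖t‖ ^ 2)) ^
        (2 * (4 * ‖s‖ ^ 2 - ‖t‖ ^ 2) /
          (3 * ‖s‖ ^ 2 - ‖t‖ ^ 2 + 1))) :
    (∀ z w : ℂ,
      Real.exp (-(‖z‖ ^ 2 + ‖w‖ ^ 2) / 2) * ‖Kst s t z w‖ ≤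
        C * Real.exp (-((‖s‖ ^ 2 - ‖t‖ ^ 2 - 1) /
            (2 * ‖s‖ ^ 2 * (3 * ‖s‖ ^ 2 - ‖t‖ ^ 2 + 1))) *
          (‖s‖ ^ 2 * (‖z‖ ^ 2 + ‖w‖ ^ 2)
            + 2 * (s * (starRingEnd ℂ) z * w).re))) ∧
    (‖s‖ ^ 2 ≥ ‖t‖ ^ 2 + 1 →
      ∀ z w : ℂ,
        Real.exp (-(‖z‖ ^ 2 + ‖w‖ ^ 2) / 2) * ‖Kst s t z w‖ ≤
          C * Real.exp (-((‖s‖ ^ 2 - ‖t‖ ^ 2 - 1) /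
              (2 * ‖s‖ ^ 2 * (3 * ‖s‖ ^ 2 - ‖t‖ ^ 2 + 1))) *
            ‖z + s * w‖ ^ 2)) := by
  have ha : 0 < ‖s‖ := (norm_nonneg t).trans_lt hst
  have hb : 0 ≤ ‖t‖ := norm_nonneg t
  set a := ‖s‖
  set b := ‖t‖
  have hb2 : b^2 < a^2 := by nlinarith
  have hN : 0 < 3*a^2 - b^2 + 1 := by nlinarith
  have h4ab : 0 < 4*a^2 - b^2 := by nlinarith
  -- the constant dominates a^(-1/2)
  have hCge : a ^ (-(1:ℝ)/2) ≤ C := by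
    have hsq : Real.sqrt (4*a^2 - b^2) ≤ 2*a := by
      calc Real.sqrt (4*a^2 - b^2) ≤ Real.sqrt ((2*a)^2) := Real.sqrt_le_sqrt (by nlinarith)
        _ = 2*a := Real.sqrt_sq (by positivity)
    have hsqpos : 0 < Real.sqrt (4*a^2 - b^2) := Real.sqrt_pos.mpr h4ab
    have hbase : 1 ≤ 2*a / Real.sqrt (4*a^2 - b^2) := (one_le_div hsqpos).mpr hsq
    have hM : 1 ≤ (2 * a / Real.sqrt (4 * a ^ 2 - b ^ 2)) ^
        (2 * (4 * a ^ 2 - b ^ 2) / (3 * a ^ 2 - b ^ 2 + 1)) :=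
      Real.one_le_rpow hbase (by positivity)
    rw [hC]
    exact le_mul_of_one_le_right (Real.rpow_nonneg ha.le _) hM
  have part1 : ∀ z w : ℂ,
      Real.exp (-(‖z‖ ^ 2 + ‖w‖ ^ 2) / 2) * ‖Kst s t z w‖ ≤
        C * Real.exp (-((a ^ 2 - b ^ 2 - 1) / (2 * a ^ 2 * (3 * a ^ 2 - b ^ 2 + 1))) *
          (a ^ 2 * (‖z‖ ^ 2 + ‖w‖ ^ 2)
            + 2 * (s * (starRingEnd ℂ) z * w).re)) := fun z w =>
    (main_bound s t hst z w).trans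
      (mul_le_mul_of_nonneg_right hCge (Real.exp_nonneg _))
  refine ⟨part1, fun hge z w => (part1 z w).trans ?_⟩
  have hC0 : 0 ≤ C := ((Real.rpow_pos_of_pos ha _).le).trans hCge
  apply mul_le_mul_of_nonneg_left _ hC0
  apply Real.exp_le_exp.mpr
  rw [neg_mul, neg_mul, neg_le_neg_iff]
  have hlam : 0 ≤ (a ^ 2 - b ^ 2 - 1) / (2 * a ^ 2 * (3 * a ^ 2 - b ^ 2 + 1)) :=
    div_nonneg (by linarith) (by positivity)
  apply mul_le_mul_of_nonneg_left _ hlam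
  rw [abs_add_sq]
  nlinarith [sq_nonneg (‖z‖), hge, sq_nonneg (‖z‖ * 1)]
end

section
/- Let s, t ∈ ℂ with |s| > |t|. Then for all z, w ∈ ℂ, the integral ∫_ℂ K^{(s,t)}(z,v)·e^{v·conj(w)}·dλ(v) converges absolutely and equals K^{(s,t)}(z,w). (Equivalently, the canonical integral operator T^{(s,t)} maps the Fock reproducing kernel K_w(v) = e^{v·conj(w)} to the function z ↦ K^{(s,t)}(z,w).) -/
open MeasureTheory Real Filter

/-- Density of the Gaussian measure `dλ(z) = π⁻¹ e^{-|z|²} dA(z)` with respect to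
Lebesgue area measure on `ℂ`. -/
noncomputable def gw (z : ℂ) : ℝ := Real.exp (-‖z‖ ^ 2) / Real.pi

private lemma sqrt_mul_sqrt {u v : ℂ} (hu : 0 < u.re) (hv : 0 < v.re)
    (huv : u * v = (Real.pi : ℂ) ^ 2) :
    u ^ (1/2 : ℂ) * v ^ (1/2 : ℂ) = (Real.pi : ℂ) := by
  have hu0 : u ≠ 0 := fun h => by simp [h] at hu
  have hv0 : v ≠ 0 := fun h => by simp [h] at hv
  set X := u ^ (1/2 : ℂ) * v ^ (1/2 : ℂ) with hX
  have hX2 : X ^ 2 = (Real.pi : ℂ) ^ 2 := by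
    have h1 : u ^ (1/2:ℂ) * u ^ (1/2:ℂ) = u := by
      rw [← Complex.cpow_add _ _ hu0]; norm_num
    have h2 : v ^ (1/2:ℂ) * v ^ (1/2:ℂ) = v := by
      rw [← Complex.cpow_add _ _ hv0]; norm_num
    calc X ^ 2 = (u^(1/2:ℂ)*u^(1/2:ℂ))*(v^(1/2:ℂ)*v^(1/2:ℂ)) := by rw [hX]; ring
    _ = u * v := by rw [h1, h2]
    _ = _ := huv
  have hau : |u.arg| < π/2 := Complex.abs_arg_lt_pi_div_two_iff.mpr (Or.inl hu)
  have hav : |v.arg| < π/2 := Complex.abs_arg_lt_pi_div_two_iff.mpr (Or.inl hv)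
  rw [abs_lt] at hau hav
  have hre : 0 < X.re := by
    rw [hX, Complex.cpow_def_of_ne_zero hu0, Complex.cpow_def_of_ne_zero hv0,
      ← Complex.exp_add, Complex.exp_re]
    apply mul_pos (Real.exp_pos _)
    apply Real.cos_pos_of_mem_Ioo
    have him : (Complex.log u * (1/2) + Complex.log v * (1/2)).im = (u.arg + v.arg)/2 := by
      simp [Complex.add_im, Complex.mul_im, Complex.log_im]
      ring
    rw [him, Set.mem_Ioo]
    constructor <;> linarith
  have hfac : (X - (Real.pi : ℂ)) * (X + (Real.pi : ℂ)) = 0 := by linear_combination hX2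
  rcases mul_eq_zero.mp hfac with h | h
  · exact sub_eq_zero.mp h
  · exfalso
    have hXe : X = -(Real.pi : ℂ) := by linear_combination h
    rw [hXe] at hre
    simp only [Complex.neg_re, Complex.ofReal_re] at hre
    linarith [Real.pi_pos]

set_option maxHeartbeats 1000000 in
private lemma gauss_integral (β γ δ : ℂ) (hβ : ‖β‖ < 1/2) :
    Integrable (fun v : ℂ => Complex.exp
      (β * ((starRingEnd ℂ) v)^2 + γ * v + δ * (starRingEnd ℂ) v - v * (starRingEnd ℂ) v)) ∧
    (∫ v : ℂ, Complex.exp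
      (β * ((starRingEnd ℂ) v)^2 + γ * v + δ * (starRingEnd ℂ) v - v * (starRingEnd ℂ) v))
      = (Real.pi : ℂ) * Complex.exp (β * γ^2 + γ * δ) := by
  set f : ℂ → ℂ := fun v => Complex.exp
      (β * ((starRingEnd ℂ) v)^2 + γ * v + δ * (starRingEnd ℂ) v - v * (starRingEnd ℂ) v) with hf
  set g : ℝ × ℝ → ℂ := fun p => f ((p.1 : ℂ) + (p.2 : ℂ) * Complex.I) with hgdef
  have hβre1 : -(1/2 : ℝ) < β.re := by
    have := Complex.abs_re_le_norm β
    rw [abs_le] at this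
    linarith [this.1]
  have hβre2 : β.re < 1/2 := lt_of_le_of_lt (Complex.re_le_norm β) hβ
  have hβ1 : β + 1 ≠ 0 := by
    intro h
    have h' : (β + 1).re = 0 := by rw [h]; simp
    simp only [Complex.add_re, Complex.one_re] at h'
    linarith
  set b : ℂ := -(β + 1) with hb_def
  set c : ℝ → ℂ := fun x => -2 * Complex.I * β * (x : ℂ) + Complex.I * (γ - δ) with hc_def
  set d : ℝ → ℂ := fun x => (β - 1) * (x : ℂ)^2 + (γ + δ) * (x : ℂ) with hd_def
  have hb : b.re < 0 := by
    simp only [hb_def, Complex.neg_re, Complex.add_re, Complex.one_re]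
    linarith
  set b' : ℂ := -(β + 1)⁻¹ with hb'_def
  set c' : ℂ := (γ * (2*β + 1) + δ) / (β + 1) with hc'_def
  set d' : ℂ := -(γ - δ)^2 / (4 * (β + 1)) with hd'_def
  have hnormSq : 0 < Complex.normSq (β + 1) := Complex.normSq_pos.mpr hβ1
  have hb' : b'.re < 0 := by
    simp only [hb'_def, Complex.neg_re, Complex.inv_re, Complex.add_re, Complex.one_re]
    have : 0 < (β.re + 1) / Complex.normSq (β + 1) := by
      apply div_pos _ hnormSq
      linarith
    linarith
  have key : ∀ x y : ℝ, g (x, y) = Complex.exp (b * (y:ℂ)^2 + c x * (y:ℂ) + d x) := by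
    intro x y
    simp only [hgdef, hf]
    congr 1
    simp only [hb_def, hc_def, hd_def, map_add, map_mul, Complex.conj_ofReal, Complex.conj_I]
    linear_combination (β * (y:ℂ)^2 + (y:ℂ)^2) * Complex.I_sq
  -- integrability of g
  set a : ℝ := 1 - ‖β‖ with ha_def
  have ha : 0 < a := by
    simp only [ha_def]; linarith
  have ha2 : 1/2 < a := by
    simp only [ha_def]; linarith
  set M : ℝ := ‖γ‖ + ‖δ‖ with hM_def
  have hgint : Integrable g := by
    have hbd : ∀ p : ℝ × ℝ, ‖g p‖ ≤
        (Real.exp (M^2) * Real.exp (-(a/2) * p.1^2)) *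
        (Real.exp (M^2) * Real.exp (-(a/2) * p.2^2)) := by
      rintro ⟨x, y⟩
      set v : ℂ := (x:ℂ) + (y:ℂ) * Complex.I with hv_def
      have habs : ‖v‖ ≤ |x| + |y| := by
        rw [hv_def]
        refine (norm_add_le _ _).trans ?_
        simp [norm_mul]
      have hsq : ‖v‖ ^ 2 = x^2 + y^2 := by
        rw [Complex.sq_norm, hv_def, Complex.normSq_add_mul_I]
      have hre : (β * ((starRingEnd ℂ) v)^2 + γ * v + δ * (starRingEnd ℂ) v
          - v * (starRingEnd ℂ) v).re ≤
          ‖β‖ * (x^2 + y^2) + M * (|x| + |y|) - (x^2 + y^2) := by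
        have hb2 : ‖β * ((starRingEnd ℂ) v)^2‖ = ‖β‖ * (x^2 + y^2) := by
          rw [norm_mul, norm_pow, Complex.norm_conj, hsq]
        have hg2 : ‖γ * v‖ ≤ ‖γ‖ * (|x| + |y|) := by
          rw [norm_mul]
          exact mul_le_mul_of_nonneg_left habs (norm_nonneg γ)
        have hd2 : ‖δ * (starRingEnd ℂ) v‖ ≤ ‖δ‖ * (|x| + |y|) := by
          rw [norm_mul, Complex.norm_conj]
          exact mul_le_mul_of_nonneg_left habs (norm_nonneg δ)
        have h1 : (β * ((starRingEnd ℂ) v)^2 + γ * v + δ * (starRingEnd ℂ) v).re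
            ≤ ‖β‖ * (x^2 + y^2) + M * (|x| + |y|) := by
          refine (Complex.re_le_norm _).trans ?_
          refine (norm_add_le _ _).trans ?_
          refine le_trans (add_le_add ((norm_add_le _ _).trans
            (add_le_add (le_of_eq hb2) hg2)) hd2) (le_of_eq ?_)
          rw [hM_def]
          ring
        have h4 : (v * (starRingEnd ℂ) v).re = x^2 + y^2 := by
          rw [Complex.mul_conj]
          rw [← hsq, Complex.sq_norm]
          simp
        rw [Complex.sub_re, h4]
        linarith
      have hnorm : ‖g (x, y)‖ = Real.exp ((β * ((starRingEnd ℂ) v)^2 + γ * v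
          + δ * (starRingEnd ℂ) v - v * (starRingEnd ℂ) v).re) := by
        simp only [hgdef, hf, hv_def, Complex.norm_exp]
      rw [hnorm, ← Real.exp_add, ← Real.exp_add, ← Real.exp_add]
      apply Real.exp_le_exp.mpr
      have e1 := sq_nonneg (|x|/2 - M)
      have e2 := sq_nonneg (|y|/2 - M)
      have hx2 : |x|^2 = x^2 := sq_abs x
      have hy2 : |y|^2 = y^2 := sq_abs y
      have haβ : ‖β‖ = 1 - a := by rw [ha_def]; ring
      rw [haβ] at hre
      nlinarith [hre, e1, e2, hx2, hy2,
        mul_nonneg (by linarith : (0:ℝ) ≤ 2*a - 1) (sq_nonneg x),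
        mul_nonneg (by linarith : (0:ℝ) ≤ 2*a - 1) (sq_nonneg y),
        abs_nonneg x, abs_nonneg y]
    have hfc : Continuous f := by
      rw [hf]
      apply Complex.continuous_exp.comp
      exact (((continuous_const.mul (Complex.continuous_conj.pow 2)).add
        (continuous_const.mul continuous_id)).add
        (continuous_const.mul Complex.continuous_conj)).sub
        (continuous_id.mul Complex.continuous_conj)
    have hv : Continuous fun p : ℝ × ℝ => (p.1 : ℂ) + (p.2 : ℂ) * Complex.I :=
      ((Complex.continuous_ofReal.comp continuous_fst).add
        ((Complex.continuous_ofReal.comp continuous_snd).mul continuous_const))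
    have hcont : Continuous g := by
      rw [hgdef]
      exact hfc.comp hv
    apply Integrable.mono' (g := fun p : ℝ × ℝ =>
        (Real.exp (M^2) * Real.exp (-(a/2) * p.1^2)) *
        (Real.exp (M^2) * Real.exp (-(a/2) * p.2^2)))
    · rw [Measure.volume_eq_prod ℝ ℝ]
      exact Integrable.mul_prod
        ((integrable_exp_neg_mul_sq (by linarith)).const_mul _)
        ((integrable_exp_neg_mul_sq (by linarith)).const_mul _)
    · exact hcont.aestronglyMeasurable
    · exact Eventually.of_forall hbd
  have hcomp : f = g ∘ Complex.measurableEquivRealProd := by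
    funext v
    simp only [Function.comp_apply, hgdef, Complex.measurableEquivRealProd_apply]
    rw [Complex.re_add_im]
  have hfint : Integrable f := by
    rw [hcomp]
    exact (Complex.volume_preserving_equiv_real_prod.integrable_comp_emb
      Complex.measurableEquivRealProd.measurableEmbedding).mpr hgint
  have hint_eq : (∫ v : ℂ, f v) = ∫ p : ℝ × ℝ, g p := by
    rw [hcomp]
    exact Complex.volume_preserving_equiv_real_prod.integral_comp
      Complex.measurableEquivRealProd.measurableEmbedding g
  refine ⟨hfint, ?_⟩
  show (∫ v : ℂ, f v) = _
  rw [hint_eq]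
  have hgprod : Integrable g (volume.prod volume) := by rwa [← Measure.volume_eq_prod ℝ ℝ]
  rw [Measure.volume_eq_prod ℝ ℝ, integral_prod _ hgprod]
  have hinner : ∀ x : ℝ, (∫ y : ℝ, g (x, y)) =
      ((π : ℂ) / -b) ^ (1/2 : ℂ) * Complex.exp (d x - (c x)^2 / (4 * b)) := by
    intro x
    simp_rw [key x]
    exact integral_cexp_quadratic hb (c x) (d x)
  simp_rw [hinner]
  have hc2 : ∀ x : ℝ, (c x)^2 = -(-2*β*(x:ℂ) + (γ - δ))^2 := by
    intro x
    simp only [hc_def]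
    linear_combination (-2*β*(x:ℂ) + (γ - δ))^2 * Complex.I_sq
  have hquad : ∀ x : ℝ, d x - (c x)^2 / (4 * b) = b' * (x:ℂ)^2 + c' * (x:ℂ) + d' := by
    intro x
    rw [hc2 x]
    simp only [hb_def, hb'_def, hd_def, hc'_def, hd'_def]
    rw [show (4:ℂ) * -(β+1) = -(4*(β+1)) by ring, div_neg, neg_div]
    field_simp
    ring
  simp_rw [hquad]
  rw [integral_const_mul, integral_cexp_quadratic hb' c' d']
  have hupos : 0 < ((π : ℂ) / -b).re := by
    have heq1 : (π : ℂ) / -b = (π : ℝ) * (β + 1)⁻¹ := by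
      rw [hb_def, neg_neg, div_eq_mul_inv]
    rw [heq1, Complex.re_ofReal_mul]
    apply mul_pos Real.pi_pos
    rw [Complex.inv_re]
    apply div_pos _ hnormSq
    simp only [Complex.add_re, Complex.one_re]
    linarith
  have hvpos : 0 < ((π : ℂ) / -b').re := by
    have heq2 : (π : ℂ) / -b' = (π : ℝ) * (β + 1) := by
      rw [hb'_def, neg_neg, div_inv_eq_mul]
    rw [heq2, Complex.re_ofReal_mul]
    apply mul_pos Real.pi_pos
    simp only [Complex.add_re, Complex.one_re]
    linarith
  have hprodpi : ((π : ℂ) / -b) * ((π : ℂ) / -b') = (Real.pi : ℂ)^2 := by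
    rw [hb_def, hb'_def, neg_neg, neg_neg, div_inv_eq_mul]
    field_simp [hβ1]
  have hsqrt : ((π : ℂ) / -b) ^ (1/2 : ℂ) * ((π : ℂ) / -b') ^ (1/2 : ℂ) = (Real.pi : ℂ) :=
    sqrt_mul_sqrt hupos hvpos hprodpi
  have hexp : d' - c'^2 / (4 * b') = β * γ^2 + γ * δ := by
    simp only [hb'_def, hc'_def, hd'_def]
    field_simp [hβ1]
    ring
  rw [← mul_assoc, hsqrt, hexp]

theorem stmt2 (s t : ℂ) (hst : ‖t‖ < ‖s‖) :
    ∀ z w : ℂ,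
      Integrable (fun v : ℂ =>
        Kst s t z v * Complex.exp (v * (starRingEnd ℂ) w) * (gw v : ℂ)) ∧
      (∫ v : ℂ, Kst s t z v * Complex.exp (v * (starRingEnd ℂ) w) * (gw v : ℂ))
        = Kst s t z w := by
  intro z w
  have hs0 : 0 < ‖s‖ := lt_of_le_of_lt (norm_nonneg t) hst
  have hs : s ≠ 0 := by
    intro h
    rw [h] at hs0
    simp at hs0
  have h2s : (2 : ℂ) * s ≠ 0 := by
    simp only [ne_eq, mul_eq_zero]
    push_neg
    exact ⟨by norm_num, hs⟩
  set β : ℂ := -((starRingEnd ℂ) t) / (2 * s) with hβ_def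
  set γ : ℂ := (starRingEnd ℂ) w with hγ_def
  set δ : ℂ := z / s with hδ_def
  have hβ : ‖β‖ < 1/2 := by
    rw [hβ_def, norm_div, norm_neg, Complex.norm_conj, norm_mul, Complex.norm_two]
    rw [div_lt_iff₀ (by positivity : (0:ℝ) < 2 * ‖s‖)]
    linarith
  obtain ⟨hint, heq⟩ := gauss_integral β γ δ hβ
  have hπ : (π : ℂ) ≠ 0 := by
    simp only [ne_eq, Complex.ofReal_eq_zero]
    exact Real.pi_ne_zero
  set c0 : ℂ := (csqrt s)⁻¹ * Complex.exp (t * z^2 / (2 * s)) * (π : ℂ)⁻¹ with hc0_def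
  have hptwise : (fun v : ℂ =>
      Kst s t z v * Complex.exp (v * (starRingEnd ℂ) w) * (gw v : ℂ)) =
      (fun v : ℂ => c0 * Complex.exp
      (β * ((starRingEnd ℂ) v)^2 + γ * v + δ * (starRingEnd ℂ) v - v * (starRingEnd ℂ) v)) := by
    funext v
    have habs : ((‖v‖ ^ 2 : ℝ) : ℂ) = v * (starRingEnd ℂ) v := by
      rw [Complex.sq_norm]
      exact_mod_cast (Complex.mul_conj v).symm
    have hcast : ((gw v : ℝ) : ℂ) = Complex.exp (-(v * (starRingEnd ℂ) v)) * (π:ℂ)⁻¹ := by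
      rw [gw, Complex.ofReal_div, Complex.ofReal_exp, Complex.ofReal_neg, habs, div_eq_mul_inv]
    rw [Kst, hcast, hc0_def]
    rw [show (csqrt s)⁻¹ *
        Complex.exp ((t * z ^ 2 - (starRingEnd ℂ) t * ((starRingEnd ℂ) v) ^ 2
          + 2 * z * (starRingEnd ℂ) v) / (2 * s)) *
        Complex.exp (v * (starRingEnd ℂ) w) *
        (Complex.exp (-(v * (starRingEnd ℂ) v)) * (π:ℂ)⁻¹) =
        (csqrt s)⁻¹ * (π:ℂ)⁻¹ *
        Complex.exp ((t * z ^ 2 - (starRingEnd ℂ) t * ((starRingEnd ℂ) v) ^ 2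
          + 2 * z * (starRingEnd ℂ) v) / (2 * s) + v * (starRingEnd ℂ) w
          + -(v * (starRingEnd ℂ) v)) by
      rw [Complex.exp_add, Complex.exp_add]; ring]
    rw [show (csqrt s)⁻¹ * Complex.exp (t * z^2 / (2 * s)) * (π : ℂ)⁻¹ *
        Complex.exp (β * ((starRingEnd ℂ) v)^2 + γ * v + δ * (starRingEnd ℂ) v
          - v * (starRingEnd ℂ) v) =
        (csqrt s)⁻¹ * (π:ℂ)⁻¹ *
        Complex.exp (t * z^2 / (2 * s) + (β * ((starRingEnd ℂ) v)^2 + γ * v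
          + δ * (starRingEnd ℂ) v - v * (starRingEnd ℂ) v)) by
      rw [Complex.exp_add]; ring]
    congr 2
    rw [hβ_def, hγ_def, hδ_def]
    field_simp
    ring
  constructor
  · rw [hptwise]
    exact hint.const_mul c0
  · rw [hptwise, integral_const_mul, heq]
    have hfin : c0 * ((π : ℂ) * Complex.exp (β * γ^2 + γ * δ)) =
        (csqrt s)⁻¹ * Complex.exp (t * z^2 / (2 * s) + (β * γ^2 + γ * δ)) := by
      rw [show c0 * ((π : ℂ) * Complex.exp (β * γ^2 + γ * δ)) =
        (csqrt s)⁻¹ * Complex.exp (t * z^2 / (2 * s)) * Complex.exp (β * γ^2 + γ * δ) *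
          ((π:ℂ)⁻¹ * (π:ℂ)) by rw [hc0_def]; ring]
      rw [inv_mul_cancel₀ hπ, mul_one, mul_assoc, ← Complex.exp_add]
    rw [hfin, Kst]
    congr 1
    congr 1
    rw [hβ_def, hγ_def, hδ_def]
    field_simp [hs]
    ring
end

section
/- Let s, t ∈ ℂ with |s| > |t|. Then for all z, w ∈ ℂ, ∫_ℂ |K^{(s,t)}(v,w)·e^{v·conj(z)}|·dλ(v) = (2√|s|/√(4|s|²−|t|²)) · |exp( −conj(t)·conj(w)²/(2s) + s·t·(w + conj(s)·z)²/(2|s|²·(4|s|²−|t|²)) )| · exp( |w + conj(s)·z|²/(4|s|²−|t|²) ). -/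
open MeasureTheory Real Filter

lemma gauss1d (k c : ℝ) (hk : 0 < k) :
    ∫ x : ℝ, Real.exp (-k * x ^ 2 + c * x) = Real.sqrt (π / k) * Real.exp (c ^ 2 / (4 * k)) := by
  have hb : ((-k : ℂ)).re < 0 := by simpa using hk
  have h := integral_cexp_quadratic hb (c : ℂ) 0
  have hL : (∫ x : ℝ, Complex.exp ((-k : ℂ) * (x:ℂ) ^ 2 + (c:ℂ) * (x:ℂ) + 0))
      = ((∫ x : ℝ, Real.exp (-k * x ^ 2 + c * x) : ℝ) : ℂ) := by
    have hpt : ∀ x : ℝ, Complex.exp ((-k : ℂ) * (x:ℂ) ^ 2 + (c:ℂ) * (x:ℂ) + 0)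
        = ((Real.exp (-k * x ^ 2 + c * x) : ℝ) : ℂ) := by
      intro x; push_cast [Complex.ofReal_exp]; ring_nf
    simp_rw [hpt]
    exact integral_ofReal
  have hR : ((π : ℂ) / -(-k : ℂ)) ^ (1 / 2 : ℂ) * Complex.exp (0 - (c:ℂ) ^ 2 / (4 * (-k:ℂ)))
      = ((Real.sqrt (π / k) * Real.exp (c ^ 2 / (4 * k)) : ℝ) : ℂ) := by
    have h1 : ((π : ℂ) / -(-k : ℂ)) = ((π / k : ℝ) : ℂ) := by push_cast; ring
    have h2 : ((π / k : ℝ) : ℂ) ^ (1 / 2 : ℂ) = ((Real.sqrt (π / k) : ℝ) : ℂ) := by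
      rw [show (1/2 : ℂ) = ((1/2 : ℝ) : ℂ) by norm_num,
        ← Complex.ofReal_cpow (by positivity), Real.sqrt_eq_rpow]
    have h3 : (0 - (c:ℂ) ^ 2 / (4 * (-k:ℂ))) = ((c ^ 2 / (4 * k) : ℝ) : ℂ) := by
      push_cast; ring
    rw [h1, h2, h3, ← Complex.ofReal_exp, ← Complex.ofReal_mul]
  rw [hL, hR] at h
  exact_mod_cast h

lemma int_rot (c : Circle) (G : ℂ → ℝ) : ∫ v : ℂ, G ((c : ℂ) * v) = ∫ v : ℂ, G v := by
  have h := ((rotation c).measurePreserving).integral_comp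
    (rotation c).toHomeomorph.measurableEmbedding G
  simpa [rotation_apply] using h

lemma int_prod (G : ℂ → ℝ) :
    ∫ v : ℂ, G v = ∫ p : ℝ × ℝ, G (⟨p.1, p.2⟩ : ℂ) := by
  have h := (Complex.volume_preserving_equiv_real_prod.symm).integral_comp
    Complex.measurableEquivRealProd.symm.measurableEmbedding G
  exact h.symm

set_option maxHeartbeats 1000000 in
theorem stmt3 (s t : ℂ) (hst : ‖t‖ < ‖s‖) :
    ∀ z w : ℂ,
      (∫ v : ℂ, ‖Kst s t v w * Complex.exp (v * (starRingEnd ℂ) z)‖ * gw v)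
        = (2 * Real.sqrt (‖s‖) / Real.sqrt (4 * ‖s‖ ^ 2 - ‖t‖ ^ 2))
          * ‖(Complex.exp
              (-((starRingEnd ℂ) t / (2 * s)) * ((starRingEnd ℂ) w) ^ 2
                + s * t * (w + (starRingEnd ℂ) s * z) ^ 2 /
                  (2 * (‖s‖ ^ 2 : ℝ) * ((4 * ‖s‖ ^ 2 - ‖t‖ ^ 2 : ℝ)))))‖
          * Real.exp (‖w + (starRingEnd ℂ) s * z‖ ^ 2 /
              (4 * ‖s‖ ^ 2 - ‖t‖ ^ 2)) := by
  intro z w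
  have hA : 0 < ‖s‖ := lt_of_le_of_lt (norm_nonneg t) hst
  have hs0 : s ≠ 0 := by simpa using hA.ne'
  set A : ℝ := ‖s‖ with hAdef
  set T : ℝ := ‖t‖ with hTdef
  have hT0 : 0 ≤ T := norm_nonneg t
  have hD : 0 < 4 * A ^ 2 - T ^ 2 := by nlinarith
  set D : ℝ := 4 * A ^ 2 - T ^ 2 with hDdef
  set a : ℂ := t / (2 * s) with hadef
  set b : ℂ := (starRingEnd ℂ) z + (starRingEnd ℂ) w / s with hbdef
  set q : ℂ := w + (starRingEnd ℂ) s * z with hqdef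
  have hq : (starRingEnd ℂ) q = s * b := by
    simp only [hqdef, hbdef, map_add, map_mul, Complex.conj_conj]
    field_simp
    ring
  set ar : ℝ := ‖a‖ with hardef
  have har : ar = T / (2 * A) := by
    simp [hardef, hadef, norm_div, norm_mul, hTdef, hAdef]
  have har0 : 0 ≤ ar := norm_nonneg a
  have hk1 : 0 < 1 - ar := by
    have : T / (2 * A) < 1 := by rw [div_lt_one (by positivity)]; nlinarith
    rw [har]; linarith
  have hk2 : 0 < 1 + ar := by positivity
  -- the rotation
  set c : Circle := Circle.exp (-(a.arg) / 2) with hcdef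
  have hc : (c : ℂ) = Complex.exp ((-(a.arg) / 2 : ℝ) * Complex.I) := Circle.coe_exp _
  have hc2 : (c : ℂ) ^ 2 = Complex.exp (-(a.arg : ℂ) * Complex.I) := by
    rw [hc, ← Complex.exp_nat_mul]
    congr 1
    push_cast
    ring
  have hac2 : a * (c : ℂ) ^ 2 = (ar : ℂ) := by
    rw [hc2]
    nth_rewrite 1 [← Complex.norm_mul_exp_arg_mul_I a]
    rw [mul_assoc, ← Complex.exp_add]
    simp [hardef]
  have hrac2 : (ar : ℂ) * (c : ℂ) ^ 2 = (starRingEnd ℂ) a := by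
    rw [hc2]
    nth_rewrite 2 [← Complex.norm_mul_exp_arg_mul_I a]
    rw [map_mul, ← Complex.exp_conj]
    congr 2
    · simp [hardef]
    · simp [Complex.ext_iff]
  set b' : ℂ := b * (c : ℂ) with hb'def
  -- pointwise identity
  set c0 : ℂ := -((starRingEnd ℂ) t) * ((starRingEnd ℂ) w) ^ 2 / (2 * s) with hc0def
  set C : ℝ := (Real.sqrt A)⁻¹ * Real.exp c0.re with hCdef
  have habsK : ∀ v : ℂ, ‖Kst s t v w * Complex.exp (v * (starRingEnd ℂ) z)‖ * gw v
      = C * (Real.exp ((a * v ^ 2 + b * v).re - ‖v‖ ^ 2) / π) := by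
    intro v
    have hKey : (t * v ^ 2 - (starRingEnd ℂ) t * ((starRingEnd ℂ) w) ^ 2
        + 2 * v * (starRingEnd ℂ) w) / (2 * s) + v * (starRingEnd ℂ) z
        = (a * v ^ 2 + b * v) + c0 := by
      simp only [hadef, hbdef, hc0def]
      field_simp
      ring
    have hsq : ‖csqrt s‖ = Real.sqrt A := by
      rw [csqrt, Complex.norm_cpow_of_ne_zero hs0]
      norm_num [Real.sqrt_eq_rpow, ← hAdef]
    have h5 : Real.exp ((t * v ^ 2 - (starRingEnd ℂ) t * ((starRingEnd ℂ) w) ^ 2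
          + 2 * v * (starRingEnd ℂ) w) / (2 * s)).re * Real.exp (v * (starRingEnd ℂ) z).re
        = Real.exp ((a * v ^ 2 + b * v).re) * Real.exp c0.re := by
      rw [← Real.exp_add, ← Real.exp_add, ← Complex.add_re, ← Complex.add_re, hKey]
    have h6 : Real.exp ((a * v ^ 2 + b * v).re - ‖v‖ ^ 2)
        = Real.exp ((a * v ^ 2 + b * v).re) * Real.exp (-‖v‖ ^ 2) := by
      rw [← Real.exp_add]; ring_nf
    simp only [Kst, gw, norm_mul, norm_inv, Complex.norm_exp, hsq]
    rw [hCdef, h6]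
    linear_combination ((Real.sqrt A)⁻¹ * (Real.exp (-‖v‖ ^ 2) / π)) * h5
  rw [integral_congr_ae (Eventually.of_forall habsK), integral_const_mul]
  -- rotate
  have hrot : (∫ v : ℂ, Real.exp ((a * v ^ 2 + b * v).re - ‖v‖ ^ 2) / π)
      = ∫ v : ℂ, Real.exp (((ar : ℂ) * v ^ 2 + b' * v).re - ‖v‖ ^ 2) / π := by
    rw [← int_rot c (fun v => Real.exp ((a * v ^ 2 + b * v).re - ‖v‖ ^ 2) / π)]
    congr 1
    ext v
    have h1 : a * ((c : ℂ) * v) ^ 2 + b * ((c : ℂ) * v) = (ar : ℂ) * v ^ 2 + b' * v := by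
      rw [← hac2, hb'def]; ring
    have h2 : ‖(c : ℂ) * v‖ = ‖v‖ := by
      rw [norm_mul, Circle.norm_coe, one_mul]
    rw [h1, h2]
  rw [hrot]
  -- to ℝ × ℝ and product
  set f : ℝ → ℝ := fun x => Real.exp (-(1 - ar) * x ^ 2 + b'.re * x) with hfdef
  set g : ℝ → ℝ := fun y => Real.exp (-(1 + ar) * y ^ 2 + (-b'.im) * y) / π with hgdef
  have hprod : (∫ v : ℂ, Real.exp (((ar : ℂ) * v ^ 2 + b' * v).re - ‖v‖ ^ 2) / π)
      = (∫ x : ℝ, f x) * ∫ y : ℝ, g y := by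
    rw [int_prod (fun v => Real.exp (((ar : ℂ) * v ^ 2 + b' * v).re - ‖v‖ ^ 2) / π)]
    rw [show ((volume : Measure (ℝ × ℝ))) = (volume : Measure ℝ).prod volume from
      MeasureTheory.Measure.volume_eq_prod ℝ ℝ, ← MeasureTheory.integral_prod_mul f g]
    congr 1
    ext p
    have hre : (((ar : ℂ) * (⟨p.1, p.2⟩ : ℂ) ^ 2 + b' * (⟨p.1, p.2⟩ : ℂ)).re)
        = ar * (p.1 ^ 2 - p.2 ^ 2) + b'.re * p.1 - b'.im * p.2 := by
      simp [pow_two, Complex.add_re, Complex.mul_re, Complex.mul_im, Complex.ofReal_re,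
        Complex.ofReal_im]
      ring
    have habs : ‖(⟨p.1, p.2⟩ : ℂ)‖ ^ 2 = p.1 ^ 2 + p.2 ^ 2 := by
      rw [Complex.sq_norm, Complex.normSq_mk]; ring
    rw [hre, habs, hfdef, hgdef]
    simp only []
    rw [div_eq_mul_inv, div_eq_mul_inv, ← mul_assoc, ← Real.exp_add]
    congr 2
    ring
  rw [hprod, gauss1d (1 - ar) b'.re hk1,
    show (∫ y : ℝ, g y) = (∫ y : ℝ, Real.exp (-(1 + ar) * y ^ 2 + (-b'.im) * y)) / π from
      integral_div π _, gauss1d (1 + ar) (-b'.im) hk2]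
  -- final algebra
  have hAn : A ≠ 0 := hA.ne'
  have hDn : D ≠ 0 := hD.ne'
  have h1n : (1 : ℝ) - ar ≠ 0 := hk1.ne'
  have h2n : (1 : ℝ) + ar ≠ 0 := hk2.ne'
  have harD : (1 - ar) * (1 + ar) * (4 * A ^ 2) = D := by
    rw [har, hDdef]; field_simp; ring
  -- prefactor
  have hsπ : Real.sqrt (π / (1 - ar)) * Real.sqrt (π / (1 + ar)) = π * (2 * A / Real.sqrt D) := by
    rw [← Real.sqrt_mul (by positivity)]
    have hval : π / (1 - ar) * (π / (1 + ar)) = (π * (2 * A / Real.sqrt D)) ^ 2 := by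
      have hDD : Real.sqrt D ^ 2 = D := Real.sq_sqrt hD.le
      have hsD : Real.sqrt D ≠ 0 := (Real.sqrt_pos.mpr hD).ne'
      field_simp
      linear_combination hDD - harD
    rw [hval, Real.sqrt_sq (by positivity)]
  have h4 : (Real.sqrt A)⁻¹ * (Real.sqrt (π / (1 - ar)) * Real.sqrt (π / (1 + ar)) / π)
      = 2 * Real.sqrt A / Real.sqrt D := by
    have hA' : Real.sqrt A * Real.sqrt A = A := Real.mul_self_sqrt hA.le
    have hsA : (0:ℝ) < Real.sqrt A := Real.sqrt_pos.mpr hA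
    have hsD : (0:ℝ) < Real.sqrt D := Real.sqrt_pos.mpr hD
    rw [hsπ]
    field_simp
    linear_combination -hA'
  -- exponent identities
  have nsb' : b'.re ^ 2 + b'.im ^ 2 = ‖b‖ ^ 2 := by
    have habs : ‖b'‖ = ‖b‖ := by rw [hb'def, norm_mul, Circle.norm_coe, mul_one]
    have h1 : ‖b'‖ ^ 2 = Complex.normSq b' := Complex.sq_norm b'
    rw [← habs, h1, Complex.normSq_apply]; ring
  have hre2 : ar * ((b' ^ 2).re) = ((starRingEnd ℂ) a * b ^ 2).re := by
    have hcx : ((ar : ℝ) : ℂ) * b' ^ 2 = (starRingEnd ℂ) a * b ^ 2 := by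
      rw [hb'def, mul_pow, ← hrac2]; ring
    rw [← Complex.re_ofReal_mul, hcx]
  have hsplit : b'.re ^ 2 / (4 * (1 - ar)) + (-b'.im) ^ 2 / (4 * (1 + ar))
      = ((b'.re ^ 2 + b'.im ^ 2) + ar * ((b' ^ 2).re)) * (A ^ 2 / D) := by
    have h2 : (b' ^ 2).re = b'.re ^ 2 - b'.im ^ 2 := by
      rw [pow_two, Complex.mul_re]; ring
    rw [h2, ← harD]
    field_simp
    ring
  have hnq : ‖b‖ ^ 2 * A ^ 2 = ‖q‖ ^ 2 := by
    have habsq : ‖q‖ = A * ‖b‖ := by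
      rw [← Complex.norm_conj q, hq, norm_mul, ← hAdef]
    rw [habsq]; ring
  have hA2 : ((A ^ 2 : ℝ) : ℂ) = s * (starRingEnd ℂ) s := by
    rw [Complex.mul_conj, hAdef, Complex.normSq_eq_norm_sq]
  have hbq : b = (starRingEnd ℂ) q / s := by rw [eq_div_iff hs0, hq]; ring
  have hXre : ((starRingEnd ℂ) a * b ^ 2).re * A ^ 2
      = (s * t * q ^ 2 / (2 * ((A ^ 2 : ℝ) : ℂ))).re := by
    have hcx2 : ((A ^ 2 : ℝ) : ℂ) * ((starRingEnd ℂ) a * b ^ 2)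
        = (starRingEnd ℂ) (s * t * q ^ 2 / (2 * ((A ^ 2 : ℝ) : ℂ))) := by
      rw [hbq, hadef, hA2]
      simp only [map_mul, map_div₀, map_pow, Complex.conj_conj, map_ofNat]
      have hcs : (starRingEnd ℂ) s ≠ 0 := by simpa using hs0
      field_simp
    calc ((starRingEnd ℂ) a * b ^ 2).re * A ^ 2
        = (((A ^ 2 : ℝ) : ℂ) * ((starRingEnd ℂ) a * b ^ 2)).re := by
          rw [Complex.re_ofReal_mul]; ring
      _ = ((starRingEnd ℂ) (s * t * q ^ 2 / (2 * ((A ^ 2 : ℝ) : ℂ)))).re := by rw [hcx2]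
      _ = _ := Complex.conj_re _
  have hX2re : (s * t * q ^ 2 / (2 * ((A ^ 2 : ℝ) : ℂ) * ((D : ℝ) : ℂ))).re
      = (s * t * q ^ 2 / (2 * ((A ^ 2 : ℝ) : ℂ))).re / D := by
    rw [show s * t * q ^ 2 / (2 * ((A ^ 2 : ℝ) : ℂ) * ((D : ℝ) : ℂ))
      = (s * t * q ^ 2 / (2 * ((A ^ 2 : ℝ) : ℂ))) / ((D : ℝ) : ℂ) by ring, Complex.div_ofReal_re]
  have h3 : b'.re ^ 2 / (4 * (1 - ar)) + (-b'.im) ^ 2 / (4 * (1 + ar))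
      = (s * t * q ^ 2 / (2 * ((A ^ 2 : ℝ) : ℂ) * ((D : ℝ) : ℂ))).re + ‖q‖ ^ 2 / D := by
    rw [hsplit, hX2re, nsb', hre2,
      show (‖b‖ ^ 2 + ((starRingEnd ℂ) a * b ^ 2).re) * (A ^ 2 / D)
        = (‖b‖ ^ 2 * A ^ 2 + ((starRingEnd ℂ) a * b ^ 2).re * A ^ 2) / D by ring,
      hnq, hXre]
    ring
  -- put it together
  have hc0' : -((starRingEnd ℂ) t / (2 * s)) * ((starRingEnd ℂ) w) ^ 2 = c0 := by
    rw [hc0def]; ring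
  rw [Complex.norm_exp, hc0', Complex.add_re]
  have eX : Real.exp (c0.re + (s * t * q ^ 2 / (2 * ((A ^ 2 : ℝ) : ℂ) * ((D : ℝ) : ℂ))).re)
        * Real.exp (‖q‖ ^ 2 / D)
      = Real.exp c0.re * (Real.exp (b'.re ^ 2 / (4 * (1 - ar)))
        * Real.exp ((-b'.im) ^ 2 / (4 * (1 + ar)))) := by
    rw [← Real.exp_add, ← Real.exp_add, ← Real.exp_add]
    congr 1
    linarith [h3]
  calc C * (Real.sqrt (π / (1 - ar)) * Real.exp (b'.re ^ 2 / (4 * (1 - ar))) *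
        (Real.sqrt (π / (1 + ar)) * Real.exp ((-b'.im) ^ 2 / (4 * (1 + ar))) / π))
      = ((Real.sqrt A)⁻¹ * (Real.sqrt (π / (1 - ar)) * Real.sqrt (π / (1 + ar)) / π)) *
        (Real.exp c0.re * (Real.exp (b'.re ^ 2 / (4 * (1 - ar)))
          * Real.exp ((-b'.im) ^ 2 / (4 * (1 + ar))))) := by rw [hCdef]; ring
    _ = (2 * Real.sqrt A / Real.sqrt D) *
        (Real.exp (c0.re + (s * t * q ^ 2 / (2 * ((A ^ 2 : ℝ) : ℂ) * ((D : ℝ) : ℂ))).re)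
          * Real.exp (‖q‖ ^ 2 / D)) := by rw [h4, eX]
    _ = _ := by ring
end

section
/- Let p > 0 and s, t ∈ ℂ with |s|² > |t|² + 1. Then ∫_ℂ ( e^{−|z|²} · ∫_ℂ |K^{(s,t)}(u,z)|²·dλ(u) )^{p/2} · dA(z) = 2π·|s| / ( p·(|s|²−|t|²−1)·(|s|²−|t|²)^{(p−2)/4} ). -/
open MeasureTheory Real Filter

lemma gauss1 (A b : ℝ) (hA : 0 < A) :
    ∫ x : ℝ, Real.exp (-A * x ^ 2 + b * x) = Real.sqrt (π / A) * Real.exp (b ^ 2 / (4 * A)) := by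
  have h := integral_cexp_quadratic (b := (-A : ℂ)) (by simpa using hA) (b : ℂ) 0
  have key : ∀ x : ℝ, Complex.exp ((-A : ℂ) * x ^ 2 + (b : ℂ) * x + 0)
      = ((Real.exp (-A * x ^ 2 + b * x) : ℝ) : ℂ) := by
    intro x; rw [Complex.ofReal_exp]; congr 1; push_cast; ring
  simp_rw [key] at h
  have h2 : (∫ x : ℝ, ((Real.exp (-A * x ^ 2 + b * x) : ℝ) : ℂ))
      = ((∫ x : ℝ, Real.exp (-A * x ^ 2 + b * x) : ℝ) : ℂ) := integral_ofReal
  rw [h2] at h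
  have hR : ((π : ℂ) / -(-A : ℂ)) ^ (1/2 : ℂ) * Complex.exp (0 - (b:ℂ)^2 / (4 * (-A:ℂ)))
      = ((Real.sqrt (π / A) * Real.exp (b ^ 2 / (4 * A)) : ℝ) : ℂ) := by
    rw [neg_neg]
    have h1 : ((π : ℂ) / (A : ℂ)) = ((π / A : ℝ) : ℂ) := by push_cast; ring
    rw [h1, show (1/2 : ℂ) = ((1/2 : ℝ) : ℂ) by norm_num,
      ← Complex.ofReal_cpow (by positivity)]
    have h2 : (0 : ℂ) - (b:ℂ)^2 / (4 * (-A:ℂ)) = ((b ^ 2 / (4 * A) : ℝ) : ℂ) := by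
      push_cast; field_simp; ring
    rw [h2, ← Complex.ofReal_exp, ← Complex.ofReal_mul, ← Real.sqrt_eq_rpow]
  rw [hR] at h
  exact_mod_cast h

lemma integrable2 (A B C g₁ g₂ : ℝ) (hA : 0 < A) (hD : 0 < 4*A*B - C^2) :
    Integrable (fun v : ℝ × ℝ =>
      Real.exp (-(A*v.1^2 + B*v.2^2 + C*v.1*v.2) + g₁*v.1 + g₂*v.2)) := by
  have hB : 0 < B := by nlinarith [sq_nonneg C]
  set δ : ℝ := (4*A*B - C^2)/(4*(A+B)) with hδdef
  have hAB : 0 < A + B := by linarith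
  have hδ : 0 < δ := by positivity
  have hAδ : δ < A := by
    rw [hδdef, div_lt_iff₀ (by linarith)]
    nlinarith [sq_nonneg C, sq_nonneg (A - B)]
  have hkey : 4*(A-δ)*(B-δ) - C^2 = 4*δ^2 := by
    rw [hδdef]; field_simp; ring
  have hbound : ∀ v : ℝ × ℝ,
      Real.exp (-(A*v.1^2 + B*v.2^2 + C*v.1*v.2) + g₁*v.1 + g₂*v.2)
      ≤ Real.exp ((g₁^2 + g₂^2)/(2*δ)) *
          (Real.exp (-(δ/2) * v.1^2) * Real.exp (-(δ/2) * v.2^2)) := by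
    intro ⟨x, y⟩
    rw [← Real.exp_add, ← Real.exp_add]
    apply Real.exp_le_exp.2
    have hQ1 : δ*(x^2+y^2) ≤ A*x^2 + B*y^2 + C*x*y := by
      nlinarith [sq_nonneg (2*(A-δ)*x + C*y), sq_nonneg y, hAδ, hkey]
    have hQ2 : g₁*x + g₂*y ≤ (δ/2)*(x^2+y^2) + (g₁^2 + g₂^2)/(2*δ) := by
      have h1 : g₁*x ≤ (δ/2)*x^2 + g₁^2/(2*δ) := by
        rw [← sub_nonneg]
        have e : (δ/2)*x^2 + g₁^2/(2*δ) - g₁*x = (δ*x - g₁)^2/(2*δ) := by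
          field_simp; ring
        rw [e]; positivity
      have h2 : g₂*y ≤ (δ/2)*y^2 + g₂^2/(2*δ) := by
        rw [← sub_nonneg]
        have e : (δ/2)*y^2 + g₂^2/(2*δ) - g₂*y = (δ*y - g₂)^2/(2*δ) := by
          field_simp; ring
        rw [e]; positivity
      have : g₁^2/(2*δ) + g₂^2/(2*δ) = (g₁^2+g₂^2)/(2*δ) := by ring
      linarith
    simp only
    linarith
  have hg : Integrable (fun v : ℝ × ℝ =>
      Real.exp ((g₁^2 + g₂^2)/(2*δ)) *
        (Real.exp (-(δ/2) * v.1^2) * Real.exp (-(δ/2) * v.2^2))) := by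
    exact ((integrable_exp_neg_mul_sq (by positivity : (0:ℝ) < δ/2)).mul_prod
      (integrable_exp_neg_mul_sq (by positivity : (0:ℝ) < δ/2))).const_mul _
  refine hg.mono' ?_ ?_
  · apply Continuous.aestronglyMeasurable; continuity
  · filter_upwards with v
    rw [Real.norm_eq_abs, abs_of_pos (Real.exp_pos _)]
    exact hbound v

lemma gauss2 (A B C g₁ g₂ : ℝ) (hA : 0 < A) (hD : 0 < 4*A*B - C^2) :
    ∫ v : ℝ × ℝ, Real.exp (-(A*v.1^2 + B*v.2^2 + C*v.1*v.2) + g₁*v.1 + g₂*v.2)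
    = 2 * π / Real.sqrt (4*A*B - C^2) *
      Real.exp ((B*g₁^2 + A*g₂^2 - C*g₁*g₂) / (4*A*B - C^2)) := by
  have hB : 0 < B := by nlinarith [sq_nonneg C]
  set Δ : ℝ := 4*A*B - C^2 with hΔdef
  have hB' : 0 < B - C^2/(4*A) := by
    rw [sub_pos, div_lt_iff₀ (by positivity)]; nlinarith
  have hint := integrable2 A B C g₁ g₂ hA hD
  rw [MeasureTheory.Measure.volume_eq_prod] at hint
  rw [MeasureTheory.Measure.volume_eq_prod, MeasureTheory.integral_prod _ hint]
  have hx : ∀ x : ℝ, (∫ y : ℝ, Real.exp (-(A*x^2 + B*y^2 + C*x*y) + g₁*x + g₂*y))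
      = (Real.exp (-A*x^2 + g₁*x) * Real.sqrt (π/B)) * Real.exp ((g₂ - C*x)^2/(4*B)) := by
    intro x
    have : ∀ y : ℝ, Real.exp (-(A*x^2 + B*y^2 + C*x*y) + g₁*x + g₂*y)
        = Real.exp (-A*x^2 + g₁*x) * Real.exp (-B*y^2 + (g₂ - C*x)*y) := by
      intro y; rw [← Real.exp_add]; ring_nf
    simp_rw [this, integral_const_mul, gauss1 B (g₂ - C*x) hB]
    ring
  simp_rw [hx]
  have hA' : 0 < A - C^2/(4*B) := by
    rw [sub_pos, div_lt_iff₀ (by positivity)]; nlinarith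
  have hy : ∀ x : ℝ, (Real.exp (-A*x^2 + g₁*x) * Real.sqrt (π/B)) * Real.exp ((g₂ - C*x)^2/(4*B))
      = (Real.sqrt (π/B) * Real.exp (g₂^2/(4*B))) *
          Real.exp (-(A - C^2/(4*B))*x^2 + (g₁ - C*g₂/(2*B))*x) := by
    intro x
    have e : (g₂ - C*x)^2/(4*B) + (-A*x^2 + g₁*x)
        = g₂^2/(4*B) + (-(A - C^2/(4*B))*x^2 + (g₁ - C*g₂/(2*B))*x) := by
      field_simp; ring
    calc (Real.exp (-A*x^2 + g₁*x) * Real.sqrt (π/B)) * Real.exp ((g₂ - C*x)^2/(4*B))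
        = Real.sqrt (π/B) * Real.exp ((g₂ - C*x)^2/(4*B) + (-A*x^2 + g₁*x)) := by
          rw [Real.exp_add ((g₂ - C*x)^2/(4*B)) (-A*x^2 + g₁*x)]; ring
      _ = Real.sqrt (π/B) * Real.exp (g₂^2/(4*B) + (-(A - C^2/(4*B))*x^2 + (g₁ - C*g₂/(2*B))*x)) := by
          rw [e]
      _ = _ := by
          rw [Real.exp_add (g₂^2/(4*B)) (-(A - C^2/(4*B))*x^2 + (g₁ - C*g₂/(2*B))*x)]; ring
  simp_rw [hy, integral_const_mul, gauss1 _ _ hA']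
  have hΔne : 4*A*B - C^2 ≠ 0 := by positivity
  have hrw : A - C^2/(4*B) = (4*A*B - C^2)/(4*B) := by field_simp
  have e1 : π/B * (π/(A - C^2/(4*B))) = (2*π/Real.sqrt Δ)^2 := by
    rw [div_pow, mul_pow, Real.sq_sqrt hD.le, hΔdef, hrw]
    field_simp [hB.ne', hΔne]
    ring
  have key : Real.sqrt (π/B) * Real.sqrt (π/(A - C^2/(4*B))) = 2*π/Real.sqrt Δ := by
    rw [← Real.sqrt_mul (by positivity : (0:ℝ) ≤ π/B), e1, Real.sqrt_sq (by positivity)]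
  have e2 : g₂^2/(4*B) + (g₁ - C*g₂/(2*B))^2/(4*(A - C^2/(4*B)))
      = (B*g₁^2 + A*g₂^2 - C*g₁*g₂)/Δ := by
    rw [hΔdef, hrw]
    field_simp [hB.ne', hΔne, show 4*B*A - C^2 ≠ 0 by rw [show 4*B*A - C^2 = 4*A*B - C^2 by ring]; exact hΔne]
    ring
  rw [← key, ← e2,
    Real.exp_add (g₂^2/(4*B)) ((g₁ - C*g₂/(2*B))^2/(4*(A - C^2/(4*B))))]
  ring

lemma gaussC (α : ℝ) (β γ : ℂ) (hβ : ‖β‖ < α) :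
    ∫ z : ℂ, Real.exp (-α * ‖z‖ ^ 2 + (β * z^2).re + (γ * z).re)
    = π / Real.sqrt (α^2 - ‖β‖ ^ 2) *
      Real.exp ((α * ‖γ‖ ^ 2 + (β * ((starRingEnd ℂ) γ)^2).re) /
        (4 * (α^2 - ‖β‖ ^ 2))) := by
  have hα : 0 < α := lt_of_le_of_lt (norm_nonneg β) hβ
  have habs2 : ‖β‖ ^ 2 = β.re^2 + β.im^2 := by
    rw [Complex.sq_norm, Complex.normSq_apply]; ring
  have hre : β.re ≤ ‖β‖ := Complex.re_le_norm β
  have hA : 0 < α - β.re := by linarith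
  have habslt : ‖β‖ ^ 2 < α ^ 2 := by
    have := norm_nonneg β
    nlinarith
  have hD : 0 < 4*(α - β.re)*(α + β.re) - (2*β.im)^2 := by
    rw [habs2] at habslt; nlinarith
  rw [← (Complex.volume_preserving_equiv_real_prod.symm).integral_comp
    Complex.measurableEquivRealProd.symm.measurableEmbedding]
  have hz : ∀ v : ℝ × ℝ,
      Real.exp (-α * ‖Complex.measurableEquivRealProd.symm v‖ ^ 2
        + (β * (Complex.measurableEquivRealProd.symm v)^2).re
        + (γ * (Complex.measurableEquivRealProd.symm v)).re)
      = Real.exp (-((α - β.re)*v.1^2 + (α + β.re)*v.2^2 + (2*β.im)*v.1*v.2)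
          + γ.re*v.1 + (-γ.im)*v.2) := by
    intro v
    congr 1
    simp only [Complex.measurableEquivRealProd_symm_apply]
    rw [Complex.sq_norm, Complex.normSq_apply]
    simp only [sq, Complex.mul_re, Complex.mul_im]
    ring
  simp_rw [hz]
  rw [gauss2 _ _ _ _ _ hA hD]
  have h4 : 4*(α - β.re)*(α + β.re) - (2*β.im)^2 = 4*(α^2 - ‖β‖ ^ 2) := by
    rw [habs2]; ring
  have hpos : 0 < α^2 - ‖β‖ ^ 2 := by linarith
  have hsq : Real.sqrt (4*(α^2 - ‖β‖ ^ 2))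
      = 2 * Real.sqrt (α^2 - ‖β‖ ^ 2) := by
    rw [show 4*(α^2 - ‖β‖ ^ 2) = 2^2*(α^2 - ‖β‖ ^ 2) by ring,
      Real.sqrt_mul (by positivity), Real.sqrt_sq (by norm_num)]
  have hnum : (α + β.re)*γ.re^2 + (α - β.re)*(-γ.im)^2 - (2*β.im)*γ.re*(-γ.im)
      = α * ‖γ‖ ^ 2 + (β * ((starRingEnd ℂ) γ)^2).re := by
    have : ‖γ‖ ^ 2 = γ.re^2 + γ.im^2 := by
      rw [Complex.sq_norm, Complex.normSq_apply]; ring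
    rw [this]
    simp only [sq, Complex.mul_re, Complex.mul_im, Complex.conj_re, Complex.conj_im]
    ring
  rw [h4, hsq, hnum,
    mul_div_mul_left _ _ (two_ne_zero (α := ℝ))]

lemma gaussC0 (α : ℝ) (β : ℂ) (hβ : ‖β‖ < α) :
    ∫ z : ℂ, Real.exp (-α * ‖z‖ ^ 2 + (β * z^2).re)
    = π / Real.sqrt (α^2 - ‖β‖ ^ 2) := by
  have h := gaussC α β 0 hβ
  simpa using h

theorem stmt5 (p : ℝ) (hp : 0 < p) (s t : ℂ)
    (hst : ‖s‖ ^ 2 > ‖t‖ ^ 2 + 1) :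
    (∫ z : ℂ, (Real.exp (-‖z‖ ^ 2) *
        ∫ u : ℂ, ‖Kst s t u z‖ ^ 2 * gw u) ^ (p / 2))
      = 2 * Real.pi * ‖s‖ /
          (p * (‖s‖ ^ 2 - ‖t‖ ^ 2 - 1) *
            (‖s‖ ^ 2 - ‖t‖ ^ 2) ^ ((p - 2) / 4)) := by
  set a : ℝ := ‖s‖ with ha
  set b : ℝ := ‖t‖ with hb
  set D : ℝ := a^2 - b^2 with hDdef
  have hbnn : 0 ≤ b := norm_nonneg t
  have hann : 0 ≤ a := norm_nonneg s
  have hD1 : 1 < D := by rw [hDdef]; linarith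
  have hDpos : 0 < D := by linarith
  have hba : b < a := by nlinarith
  have hapos : 0 < a := by linarith
  have hs0 : s ≠ 0 := by
    intro h
    rw [h] at ha; simp at ha; rw [ha] at hapos; exact lt_irrefl 0 hapos
  have hcs0 : (starRingEnd ℂ) s ≠ 0 := by simpa using hs0
  set τ : ℂ := t / (starRingEnd ℂ) s with hτ
  have hτabs : ‖τ‖ = b / a := by
    rw [hτ, norm_div, Complex.norm_conj, ← ha, ← hb]
  -- Step A: pointwise formula for the Berezin-type transform
  have hinner : ∀ z : ℂ, Real.exp (-‖z‖ ^ 2) *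
      (∫ u : ℂ, ‖Kst s t u z‖ ^ 2 * gw u)
      = (Real.sqrt D)⁻¹ *
        Real.exp (-((D-1)/D) * (‖z‖ ^ 2 + (τ * z^2).re)) := by
    intro z
    have hcsq : ‖csqrt s‖ ^ 2 = a := by
      have h0 : csqrt s = s ^ (((2:ℝ)⁻¹ : ℝ) : ℂ) := by rw [csqrt]; norm_num
      rw [h0, Complex.norm_cpow_real, ← ha,
        ← Real.rpow_natCast (a ^ ((2:ℝ)⁻¹)) 2, ← Real.rpow_mul hann]
      norm_num
    have hKgw : ∀ u : ℂ, ‖Kst s t u z‖ ^ 2 * gw u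
        = (a⁻¹ * π⁻¹ * Real.exp (-(τ * z^2).re)) *
          Real.exp (-1 * ‖u‖ ^ 2 + ((t/s) * u^2).re
            + ((2 * (starRingEnd ℂ) z / s) * u).re) := by
      intro u
      rw [Kst, gw, norm_mul, norm_inv, Complex.norm_exp, mul_pow, inv_pow, hcsq]
      rw [sq (Real.exp _), ← Real.exp_add]
      have hexp : ((t * u ^ 2 - (starRingEnd ℂ) t * ((starRingEnd ℂ) z) ^ 2
            + 2 * u * (starRingEnd ℂ) z) / (2 * s)).re
          + ((t * u ^ 2 - (starRingEnd ℂ) t * ((starRingEnd ℂ) z) ^ 2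
            + 2 * u * (starRingEnd ℂ) z) / (2 * s)).re
          + (-‖u‖ ^ 2)
          = -(τ * z^2).re + (-1 * ‖u‖ ^ 2 + ((t/s) * u^2).re
            + ((2 * (starRingEnd ℂ) z / s) * u).re) := by
        have hc : ((t * u ^ 2 - (starRingEnd ℂ) t * ((starRingEnd ℂ) z) ^ 2
              + 2 * u * (starRingEnd ℂ) z) / (2 * s))
            + ((t * u ^ 2 - (starRingEnd ℂ) t * ((starRingEnd ℂ) z) ^ 2
              + 2 * u * (starRingEnd ℂ) z) / (2 * s))
            = -((starRingEnd ℂ) (τ * z^2)) + ((t/s) * u^2 + (2 * (starRingEnd ℂ) z / s) * u) := by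
          rw [hτ, map_mul, map_div₀, Complex.conj_conj, map_pow]
          field_simp
          ring
        have := congrArg Complex.re hc
        simp only [Complex.add_re, Complex.neg_re, Complex.conj_re] at this
        linarith
      have hE : Real.exp (((t * u ^ 2 - (starRingEnd ℂ) t * ((starRingEnd ℂ) z) ^ 2
            + 2 * u * (starRingEnd ℂ) z) / (2 * s)).re
          + ((t * u ^ 2 - (starRingEnd ℂ) t * ((starRingEnd ℂ) z) ^ 2
            + 2 * u * (starRingEnd ℂ) z) / (2 * s)).re)
          * Real.exp (-‖u‖ ^ 2)
          = Real.exp (-(τ * z^2).re) *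
            Real.exp (-1 * ‖u‖ ^ 2 + ((t/s) * u^2).re
              + ((2 * (starRingEnd ℂ) z / s) * u).re) := by
        rw [← Real.exp_add, ← Real.exp_add, hexp]
      linear_combination a⁻¹ * π⁻¹ * hE
    simp_rw [hKgw]
    rw [integral_const_mul]
    have hβlt : ‖t/s‖ < 1 := by
      rw [norm_div, ← ha, ← hb, div_lt_one hapos]; exact hba
    rw [gaussC 1 (t/s) (2 * (starRingEnd ℂ) z / s) hβlt]
    -- simplify the resulting closed form
    have h1 : (1:ℝ)^2 - ‖t/s‖ ^ 2 = D / a^2 := by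
      rw [norm_div, ← ha, ← hb, div_pow, hDdef]
      field_simp
    have hsqrt : Real.sqrt (D / a^2) = Real.sqrt D / a := by
      rw [Real.sqrt_div hDpos.le, Real.sqrt_sq hann]
    have hγabs : ‖2 * (starRingEnd ℂ) z / s‖ ^ 2
        = 4 * ‖z‖ ^ 2 / a ^ 2 := by
      rw [norm_div, norm_mul, Complex.norm_conj, ← ha, div_pow, mul_pow]
      norm_num
    have hγre : ((t/s) * ((starRingEnd ℂ) (2 * (starRingEnd ℂ) z / s))^2).re
        = 4 * (τ * z^2).re / a ^ 2 := by
      have hc1 : (t/s) * ((starRingEnd ℂ) (2 * (starRingEnd ℂ) z / s))^2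
          = ((4:ℝ) : ℂ) * (τ * z^2) / ((a^2 : ℝ) : ℂ) := by
        have h2 : ((a^2 : ℝ) : ℂ) = s * (starRingEnd ℂ) s := by
          rw [ha, Complex.sq_norm, Complex.mul_conj]
        rw [h2, hτ, map_div₀, map_mul, Complex.conj_conj]
        simp only [map_ofNat, Complex.ofReal_ofNat]
        field_simp
        ring
      rw [hc1, Complex.div_ofReal_re, Complex.re_ofReal_mul]
    rw [h1, hsqrt, hγabs, hγre, one_mul]
    have hsD : 0 < Real.sqrt D := Real.sqrt_pos.2 hDpos
    have hexps : Real.exp (-‖z‖ ^ 2) * Real.exp (-(τ * z^2).re) *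
        Real.exp ((4 * ‖z‖ ^ 2 / a ^ 2 + 4 * (τ * z^2).re / a ^ 2) / (4 * (D / a^2)))
        = Real.exp (-((D-1)/D) * (‖z‖ ^ 2 + (τ * z^2).re)) := by
      rw [← Real.exp_add, ← Real.exp_add]
      congr 1
      field_simp [hapos.ne', hDpos.ne']
      ring
    have hnum : a⁻¹ * π⁻¹ * (π / (Real.sqrt D / a)) = (Real.sqrt D)⁻¹ := by
      rw [div_div_eq_mul_div]
      field_simp [hapos.ne', Real.pi_ne_zero, hsD.ne']
    calc Real.exp (-‖z‖ ^ 2) *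
        (a⁻¹ * π⁻¹ * Real.exp (-(τ * z^2).re) *
          (π / (Real.sqrt D / a) *
            Real.exp ((4 * ‖z‖ ^ 2 / a ^ 2 + 4 * (τ * z^2).re / a ^ 2)
              / (4 * (D / a^2)))))
        = (a⁻¹ * π⁻¹ * (π / (Real.sqrt D / a))) *
          (Real.exp (-‖z‖ ^ 2) * Real.exp (-(τ * z^2).re) *
            Real.exp ((4 * ‖z‖ ^ 2 / a ^ 2 + 4 * (τ * z^2).re / a ^ 2)
              / (4 * (D / a^2)))) := by ring
      _ = (Real.sqrt D)⁻¹ *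
          Real.exp (-((D-1)/D) * (‖z‖ ^ 2 + (τ * z^2).re)) := by
          rw [hnum, hexps]
  -- Step B: outer integral
  simp_rw [hinner]
  set α' : ℝ := p * (D - 1) / (2 * D) with hα'
  have hDm1 : 0 < D - 1 := by linarith
  have hα'pos : 0 < α' := by
    rw [hα']; positivity
  set β' : ℂ := ((-α' : ℝ) : ℂ) * τ with hβ'
  have houter : ∀ z : ℂ, ((Real.sqrt D)⁻¹ *
      Real.exp (-((D-1)/D) * (‖z‖ ^ 2 + (τ * z^2).re))) ^ (p/2)
      = ((Real.sqrt D)⁻¹) ^ (p/2) *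
        Real.exp (-α' * ‖z‖ ^ 2 + (β' * z^2).re) := by
    intro z
    rw [Real.mul_rpow (by positivity) (Real.exp_pos _).le]
    congr 1
    rw [Real.rpow_def_of_pos (Real.exp_pos _), Real.log_exp]
    congr 1
    have hre : (β' * z^2).re = -α' * (τ * z^2).re := by
      rw [hβ', mul_assoc, Complex.re_ofReal_mul]
    rw [hre, hα']
    field_simp
    ring
  simp_rw [houter]
  rw [integral_const_mul]
  have hsD : 0 < Real.sqrt D := Real.sqrt_pos.2 hDpos
  have hβ'abs : ‖β'‖ = α' * (b/a) := by
    rw [hβ', norm_mul, Complex.norm_real, Real.norm_eq_abs, hτabs, abs_neg, abs_of_pos hα'pos]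
  have hβ'lt : ‖β'‖ < α' := by
    rw [hβ'abs]
    calc α' * (b/a) < α' * 1 := by
          apply mul_lt_mul_of_pos_left _ hα'pos
          rw [div_lt_one hapos]; exact hba
      _ = α' := mul_one α'
  rw [gaussC0 α' β' hβ'lt]
  have habs2 : α'^2 - ‖β'‖ ^ 2 = α'^2 * D / a^2 := by
    rw [hβ'abs, hDdef]
    field_simp [hapos.ne']
  have hsq2 : Real.sqrt (α'^2 * D / a^2) = α' * Real.sqrt D / a := by
    rw [show α'^2 * D / a^2 = (α'/a)^2 * D from by ring,
      Real.sqrt_mul (sq_nonneg _) D,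
      Real.sqrt_sq (by positivity : (0:ℝ) ≤ α'/a)]
    ring
  rw [habs2, hsq2]
  -- final algebra
  have hpr : D ^ (-(p/4)) * D ^ ((p-2)/4) = (Real.sqrt D)⁻¹ := by
    rw [← Real.rpow_add hDpos, show -(p/4) + (p-2)/4 = -(1/2 : ℝ) by ring,
      Real.rpow_neg hDpos.le, Real.sqrt_eq_rpow]
  have e3 : ((Real.sqrt D)⁻¹) ^ (p/2) = D ^ (-(p/4)) := by
    rw [Real.sqrt_eq_rpow, ← Real.rpow_neg_one (D ^ ((1:ℝ)/2)), ← Real.rpow_mul hDpos.le,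
      ← Real.rpow_mul hDpos.le]
    congr 1
    ring
  rw [e3]
  have hX3 : Real.sqrt D * Real.sqrt D = D := Real.mul_self_sqrt hDpos.le
  have hsD : 0 < Real.sqrt D := Real.sqrt_pos.2 hDpos
  have hpr' : D ^ (-(p/4)) * D ^ ((p-2)/4) * Real.sqrt D = 1 := by
    rw [hpr, inv_mul_cancel₀ hsD.ne']
  have hden : 0 < p * (D - 1) * D ^ ((p-2)/4) := by
    exact mul_pos (mul_pos hp hDm1) (Real.rpow_pos_of_pos hDpos _)
  have hαid : α' * (2*D) = p * (D-1) := by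
    rw [hα']; field_simp
  have hα'sD : 0 < α' * Real.sqrt D := mul_pos hα'pos hsD
  rw [div_div_eq_mul_div, ← mul_div_assoc, div_eq_div_iff hα'sD.ne' hden.ne']
  linear_combination (-(π*a*(D ^ (-(p/4)) * D ^ ((p-2)/4))))*hαid
    + (2*π*a*α'*Real.sqrt D)*hpr'
    + (-(2*π*a*α'*(D ^ (-(p/4)) * D ^ ((p-2)/4))))*hX3
end

section
/- Let s, t ∈ ℂ with |s|² > |t|² + 1. Then the integral π⁻¹·∫_ℂ e^{−|z|²}·K^{(s,t)}(z,z)·dA(z) converges absolutely and equals (1/√s)·√( s²/((s−1)² + |t|²) ), where both square roots are principal. (This integral equals the trace of the trace-class operator T^{(s,t)} on the Fock space F².) -/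
open MeasureTheory Real Filter

open Complex in
private lemma sqrt_half_mul' (w₁ w₂ : ℂ) (h1 : 0 < w₁.re) (h2 : 0 < w₂.re) :
    w₁ ^ ((1:ℂ)/2) * w₂ ^ ((1:ℂ)/2) = (π : ℂ) * ((w₁ * w₂ / (π:ℂ)^2) ^ ((1:ℂ)/2)) := by
  have h1' : w₁ ≠ 0 := by intro h; rw [h] at h1; simp at h1
  have h2' : w₂ ≠ 0 := by intro h; rw [h] at h2; simp at h2
  have hπ : (0:ℝ) < π := Real.pi_pos
  have ha1 : |arg w₁| < π/2 := abs_arg_lt_pi_div_two_iff.mpr (Or.inl h1)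
  have ha2 : |arg w₂| < π/2 := abs_arg_lt_pi_div_two_iff.mpr (Or.inl h2)
  obtain ⟨ha1l, ha1r⟩ := abs_lt.mp ha1
  obtain ⟨ha2l, ha2r⟩ := abs_lt.mp ha2
  have harg : arg w₁ + arg w₂ ∈ Set.Ioc (-π) π := ⟨by linarith, by linarith⟩
  have hlog : Complex.log (w₁ * w₂) = Complex.log w₁ + Complex.log w₂ :=
    Complex.log_mul h1' h2' harg
  have h12 : w₁ * w₂ ≠ 0 := mul_ne_zero h1' h2'
  have hpos : (0:ℝ) < ((π:ℝ)^2)⁻¹ := by positivity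
  have hmm : w₁ * w₂ / (π:ℂ)^2 = ((((π:ℝ)^2)⁻¹ : ℝ) : ℂ) * (w₁ * w₂) := by
    push_cast; field_simp
  have hne : ((((π:ℝ)^2)⁻¹ : ℝ) : ℂ) * (w₁ * w₂) ≠ 0 := by
    apply mul_ne_zero _ h12
    simpa using hπ.ne'
  rw [hmm, Complex.cpow_def_of_ne_zero hne, Complex.cpow_def_of_ne_zero h1',
    Complex.cpow_def_of_ne_zero h2', Complex.log_ofReal_mul hpos h12, hlog,
    ← Complex.exp_add]
  have hrw : ((↑(Real.log (((π:ℝ)^2)⁻¹)) + (Complex.log w₁ + Complex.log w₂)) * ((1:ℂ)/2))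
      = (↑(-Real.log π) : ℂ) + (Complex.log w₁ * ((1:ℂ)/2) + Complex.log w₂ * ((1:ℂ)/2)) := by
    rw [Real.log_inv, Real.log_pow]
    push_cast; ring
  rw [hrw, Complex.exp_add, Complex.exp_add]
  rw [show Complex.exp (↑(-Real.log π)) = ((π:ℂ))⁻¹ by
    rw [← Complex.ofReal_exp, Real.exp_neg, Real.exp_log hπ, Complex.ofReal_inv]]
  rw [Complex.exp_add, ← mul_assoc, mul_inv_cancel₀ (by simpa using hπ.ne' : (π:ℂ) ≠ 0), one_mul]

private lemma csqrt_sq (x : ℂ) : (csqrt x) ^ 2 = x := by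
  rw [csqrt, one_div]
  exact_mod_cast Complex.cpow_ofNat_inv_pow x 2

theorem stmt7 (s t : ℂ) (hst : ‖s‖ ^ 2 > ‖t‖ ^ 2 + 1) :
    Integrable (fun z : ℂ => (Real.exp (-‖z‖ ^ 2) : ℂ) * Kst s t z z) ∧
    (Real.pi : ℂ)⁻¹ * (∫ z : ℂ, (Real.exp (-‖z‖ ^ 2) : ℂ) * Kst s t z z)
      = (csqrt s)⁻¹ *
          csqrt (s ^ 2 / ((s - 1) ^ 2 + ((‖t‖ ^ 2 : ℝ) : ℂ))) := by
  have hπ : (0:ℝ) < π := Real.pi_pos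
  have htnn : (0:ℝ) ≤ ‖t‖ := norm_nonneg t
  have hs1 : 1 < ‖s‖ ^ 2 := by nlinarith [sq_nonneg ‖t‖]
  have hs0 : s ≠ 0 := by
    intro h
    rw [h] at hs1; simp at hs1; linarith
  set r : ℝ := ‖t‖ with hr
  -- the rotation constant
  obtain ⟨c, hca, hc2⟩ : ∃ c : ℂ, ‖c‖ = 1 ∧ t * c ^ 2 = Complex.I * r := by
    rcases eq_or_ne t 0 with h0 | h0
    · refine ⟨1, by simp, by simp [h0, hr]⟩
    · have hr0 : (0:ℝ) < r := by simpa [hr] using norm_pos_iff.mpr h0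
      refine ⟨csqrt (Complex.I * (starRingEnd ℂ) t / (r:ℂ)), ?_, ?_⟩
      · have habs : ‖Complex.I * (starRingEnd ℂ) t / (r:ℝ)‖ = 1 := by
          rw [norm_div, norm_mul, Complex.norm_I, Complex.norm_conj,
            Complex.norm_of_nonneg hr0.le, one_mul, ← hr, div_self hr0.ne']
        have h2 := congrArg (‖·‖) (csqrt_sq (Complex.I * (starRingEnd ℂ) t / (r:ℂ)))
        rw [norm_pow, habs] at h2
        exact (pow_left_inj₀ (norm_nonneg _) zero_le_one two_ne_zero).mp
          (by rw [h2]; norm_num)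
      · rw [csqrt_sq]
        have : t * (Complex.I * (starRingEnd ℂ) t / (r:ℂ))
            = Complex.I * ((t * (starRingEnd ℂ) t) / (r:ℂ)) := by ring
        rw [this, Complex.mul_conj, Complex.normSq_eq_norm_sq, ← hr,
          show ((r^2 : ℝ) : ℂ) = ((r:ℂ))^2 by push_cast; ring,
          show ((r:ℂ))^2 / (r:ℂ) = (r:ℂ) by
            have : (r:ℂ) ≠ 0 := by exact_mod_cast hr0.ne'
            field_simp]
  have hcc : c * (starRingEnd ℂ) c = 1 := by
    rw [Complex.mul_conj, Complex.normSq_eq_norm_sq, hca]; norm_num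
  -- the diagonal coefficients
  set α : ℂ := (1 + Complex.I * r)/s - 1 with hα
  set β : ℂ := (1 - Complex.I * r)/s - 1 with hβ
  have habs1 : ‖(1 + Complex.I * r)/s‖ < 1 := by
    rw [norm_div, div_lt_one (norm_pos_iff.mpr hs0)]
    apply lt_of_pow_lt_pow_left₀ 2 (norm_nonneg s)
    have : ‖1 + Complex.I * (r:ℂ)‖ ^ 2 = 1 + r^2 := by
      rw [Complex.sq_norm, Complex.normSq_apply]
      simp
      ring
    rw [this]
    rw [hr]; linarith
  have habs2 : ‖(1 - Complex.I * r)/s‖ < 1 := by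
    rw [norm_div, div_lt_one (norm_pos_iff.mpr hs0)]
    apply lt_of_pow_lt_pow_left₀ 2 (norm_nonneg s)
    have : ‖1 - Complex.I * (r:ℂ)‖ ^ 2 = 1 + r^2 := by
      rw [Complex.sq_norm, Complex.normSq_apply]
      simp
      ring
    rw [this]
    rw [hr]; linarith
  have hαre : α.re < 0 := by
    have h := (Complex.re_le_norm ((1 + Complex.I * r)/s)).trans_lt habs1
    rw [hα, Complex.sub_re, Complex.one_re]
    linarith
  have hβre : β.re < 0 := by
    have h := (Complex.re_le_norm ((1 - Complex.I * r)/s)).trans_lt habs2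
    rw [hβ, Complex.sub_re, Complex.one_re]
    linarith
  have hα0 : α ≠ 0 := by intro h; rw [h] at hαre; simp at hαre
  have hβ0 : β ≠ 0 := by intro h; rw [h] at hβre; simp at hβre
  have hnegα : (0:ℝ) < (-α).re := by simpa using hαre
  have hnegβ : (0:ℝ) < (-β).re := by simpa using hβre
  -- pointwise identity after rotation
  have hpt : ∀ z : ℂ, (Real.exp (-‖c*z‖ ^ 2) : ℂ) * Kst s t (c*z) (c*z)
      = (csqrt s)⁻¹ * Complex.exp (α * (z.re:ℂ)^2 + β * (z.im:ℂ)^2) := by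
    intro z
    have habs' : ((-‖c*z‖ ^ 2 : ℝ) : ℂ) = -(z * (starRingEnd ℂ) z) := by
      rw [Complex.mul_conj, Complex.normSq_eq_norm_sq, norm_mul, hca, one_mul]
      push_cast; ring
    have e1 : t * (c*z)^2 = Complex.I * r * z^2 := by
      calc t * (c*z)^2 = (t * c^2) * z^2 := by ring
      _ = Complex.I * r * z^2 := by rw [hc2]
    have e2 : (starRingEnd ℂ) t * ((starRingEnd ℂ) (c*z))^2
        = -(Complex.I * r) * ((starRingEnd ℂ) z)^2 := by
      calc (starRingEnd ℂ) t * ((starRingEnd ℂ) (c*z))^2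
          = (starRingEnd ℂ) (t * c^2) * ((starRingEnd ℂ) z)^2 := by
            rw [map_mul, map_mul, map_pow]; ring
      _ = -(Complex.I * r) * ((starRingEnd ℂ) z)^2 := by
            rw [hc2, map_mul, Complex.conj_I, Complex.conj_ofReal]; ring
    have e3 : 2*(c*z) * ((starRingEnd ℂ) (c*z)) = 2 * (z * (starRingEnd ℂ) z) := by
      rw [map_mul]
      calc 2*(c*z) * ((starRingEnd ℂ) c * (starRingEnd ℂ) z)
          = 2 * (c * (starRingEnd ℂ) c) * (z * (starRingEnd ℂ) z) := by ring
      _ = 2 * (z * (starRingEnd ℂ) z) := by rw [hcc]; ring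
    have hexp : ((-‖c*z‖ ^ 2 : ℝ) : ℂ)
        + (t * (c*z)^2 - (starRingEnd ℂ) t * ((starRingEnd ℂ) (c*z))^2
            + 2*(c*z)*((starRingEnd ℂ) (c*z))) / (2*s)
        = α * (z.re:ℂ)^2 + β * (z.im:ℂ)^2 := by
      have hX2 : ((z.re:ℝ):ℂ)^2 = (z + (starRingEnd ℂ) z)^2 / 4 := by
        rw [Complex.add_conj]; push_cast; ring
      have hY2 : ((z.im:ℝ):ℂ)^2 = -((z - (starRingEnd ℂ) z)^2) / 4 := by
        rw [Complex.sub_conj, mul_pow, Complex.I_sq]; push_cast; ring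
      rw [habs', e1, e2, e3, hX2, hY2, hα, hβ]
      field_simp
      ring
    rw [Kst, Complex.ofReal_exp, mul_left_comm, ← Complex.exp_add, hexp]
  -- 1D Gaussian facts
  have hi1 : Integrable (fun x : ℝ => Complex.exp (α * (x:ℂ)^2)) := by
    simpa using integrable_cexp_neg_mul_sq hnegα
  have hi2 : Integrable (fun x : ℝ => Complex.exp (β * (x:ℂ)^2)) := by
    simpa using integrable_cexp_neg_mul_sq hnegβ
  have hI1 : ∫ x : ℝ, Complex.exp (α * (x:ℂ)^2) = ((π:ℂ) / (-α)) ^ ((1:ℂ)/2) := by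
    simpa using integral_gaussian_complex hnegα
  have hI2 : ∫ x : ℝ, Complex.exp (β * (x:ℂ)^2) = ((π:ℂ) / (-β)) ^ ((1:ℂ)/2) := by
    simpa using integral_gaussian_complex hnegβ
  -- product structure on ℝ × ℝ
  have hGint : Integrable (fun p : ℝ × ℝ =>
      Complex.exp (α * (p.1:ℂ)^2) * Complex.exp (β * (p.2:ℂ)^2)) := by
    rw [MeasureTheory.Measure.volume_eq_prod]
    exact hi1.mul_prod hi2
  have hGval : ∫ p : ℝ × ℝ, Complex.exp (α * (p.1:ℂ)^2) * Complex.exp (β * (p.2:ℂ)^2)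
      = ((π:ℂ) / (-α)) ^ ((1:ℂ)/2) * ((π:ℂ) / (-β)) ^ ((1:ℂ)/2) := by
    rw [MeasureTheory.Measure.volume_eq_prod]
    exact (MeasureTheory.integral_prod_mul (fun x : ℝ => Complex.exp (α * (x:ℂ)^2))
      (fun y : ℝ => Complex.exp (β * (y:ℂ)^2))).trans (by rw [hI1, hI2])
  -- transfer to ℂ
  set G : ℝ × ℝ → ℂ := fun p => (csqrt s)⁻¹ *
      (Complex.exp (α * (p.1:ℂ)^2) * Complex.exp (β * (p.2:ℂ)^2)) with hGdef
  have hgG : (fun z : ℂ => (csqrt s)⁻¹ * Complex.exp (α * (z.re:ℂ)^2 + β * (z.im:ℂ)^2))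
      = fun z : ℂ => G (Complex.measurableEquivRealProd z) := by
    funext z
    rw [hGdef]
    simp only [Complex.measurableEquivRealProd_apply, ← Complex.exp_add]
  have hgint : Integrable
      (fun z : ℂ => (csqrt s)⁻¹ * Complex.exp (α * (z.re:ℂ)^2 + β * (z.im:ℂ)^2)) := by
    rw [hgG]
    exact (Complex.volume_preserving_equiv_real_prod.integrable_comp_emb
      (MeasurableEquiv.measurableEmbedding _) (g := G)).mpr
      (by rw [hGdef]; exact hGint.const_mul _)
  have hgval : ∫ z : ℂ, (csqrt s)⁻¹ * Complex.exp (α * (z.re:ℂ)^2 + β * (z.im:ℂ)^2)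
      = (csqrt s)⁻¹ * (((π:ℂ)/(-α)) ^ ((1:ℂ)/2) * ((π:ℂ)/(-β)) ^ ((1:ℂ)/2)) := by
    rw [hgG]
    exact (Complex.volume_preserving_equiv_real_prod.integral_comp' G).trans
      (by rw [hGdef]; rw [MeasureTheory.integral_const_mul, hGval])
  -- the rotation
  obtain ⟨u, hu⟩ : ∃ u : Circle, (u:ℂ) = c :=
    ⟨⟨c, by simp [Submonoid.unitSphere, Metric.mem_sphere, dist_zero_right,
        hca]⟩, rfl⟩
  have hfun : ⇑(rotation u) = fun z : ℂ => c * z := funext fun z => by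
    rw [rotation_apply, hu]
  have hmp : MeasurePreserving (fun z : ℂ => c * z) volume volume :=
    hfun ▸ (rotation u).measurePreserving
  have hemb : MeasurableEmbedding (fun z : ℂ => c * z) :=
    hfun ▸ (rotation u).toHomeomorph.measurableEmbedding
  have hcomp : ((fun z : ℂ => (Real.exp (-‖z‖ ^ 2) : ℂ) * Kst s t z z)
      ∘ (fun z : ℂ => c * z))
      = fun z : ℂ => (csqrt s)⁻¹ * Complex.exp (α * (z.re:ℂ)^2 + β * (z.im:ℂ)^2) :=
    funext fun z => hpt z
  have hfint : Integrable (fun z : ℂ => (Real.exp (-‖z‖ ^ 2) : ℂ) * Kst s t z z) :=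
    (hmp.integrable_comp_emb hemb).mp (by rw [hcomp]; exact hgint)
  have hfval : (∫ z : ℂ, (Real.exp (-‖z‖ ^ 2) : ℂ) * Kst s t z z)
      = (csqrt s)⁻¹ * (((π:ℂ)/(-α)) ^ ((1:ℂ)/2) * ((π:ℂ)/(-β)) ^ ((1:ℂ)/2)) := by
    rw [← hmp.integral_comp hemb
      (fun z : ℂ => (Real.exp (-‖z‖ ^ 2) : ℂ) * Kst s t z z)]
    simp_rw [hpt]
    exact hgval
  refine ⟨hfint, ?_⟩
  rw [hfval]
  -- final algebra with principal square roots
  have hw1 : 0 < ((π:ℂ)/(-α)).re := by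
    rw [div_eq_mul_inv, Complex.re_ofReal_mul]
    exact mul_pos hπ (by rw [Complex.inv_re]
                         exact div_pos hnegα (Complex.normSq_pos.mpr (neg_ne_zero.mpr hα0)))
  have hw2 : 0 < ((π:ℂ)/(-β)).re := by
    rw [div_eq_mul_inv, Complex.re_ofReal_mul]
    exact mul_pos hπ (by rw [Complex.inv_re]
                         exact div_pos hnegβ (Complex.normSq_pos.mpr (neg_ne_zero.mpr hβ0)))
  have key := sqrt_half_mul' _ _ hw1 hw2
  have hπc : (π:ℂ) ≠ 0 := by exact_mod_cast hπ.ne'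
  have hD : ((s-1)^2 + ((r^2:ℝ):ℂ)) = s^2 * ((-α) * (-β)) := by
    rw [hα, hβ]
    push_cast
    field_simp
    ring_nf
    linear_combination ((r:ℂ)^2) * Complex.I_sq
  have hDs : (π:ℂ)/(-α) * ((π:ℂ)/(-β)) / (π:ℂ)^2
      = s^2 / ((s-1)^2 + ((r^2:ℝ):ℂ)) := by
    rw [hD]
    field_simp
  rw [csqrt, csqrt, key, hDs]
  field_simp
end

section
/- Let s, t ∈ ℂ with |s|² > |t|² + 1. Then there exists a unique γ ∈ ℂ with |γ| < 1 satisfying conj(s·t)·γ² + (|s|²+|t|²+1)·γ + s·t = 0. Moreover, for this γ the number |s|² + γ·conj(s·t) is real and equals ( (|s|²−|t|²−1) + √((|s|²−|t|²−1)² + 4|s|²) )/2, which is strictly greater than |s|; consequently λ₀ = |s|/(|s|² + γ·conj(s·t)) lies in the open interval (0,1). -/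
open MeasureTheory Real Filter

set_option maxHeartbeats 1000000 in
theorem stmt8 (s t : ℂ) (hst : ‖s‖ ^ 2 > ‖t‖ ^ 2 + 1) :
    (∃! γ : ℂ, ‖γ‖ < 1 ∧
      (starRingEnd ℂ) (s * t) * γ ^ 2
        + ((‖s‖ ^ 2 + ‖t‖ ^ 2 + 1 : ℝ) : ℂ) * γ + s * t = 0) ∧
    ∀ γ : ℂ, ‖γ‖ < 1 →
      (starRingEnd ℂ) (s * t) * γ ^ 2
        + ((‖s‖ ^ 2 + ‖t‖ ^ 2 + 1 : ℝ) : ℂ) * γ + s * t = 0 →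
      (((‖s‖ ^ 2 : ℝ) : ℂ) + γ * (starRingEnd ℂ) (s * t)
        = (((‖s‖ ^ 2 - ‖t‖ ^ 2 - 1
            + Real.sqrt ((‖s‖ ^ 2 - ‖t‖ ^ 2 - 1) ^ 2
                + 4 * ‖s‖ ^ 2)) / 2 : ℝ) : ℂ)) ∧
      ‖s‖ <
        (‖s‖ ^ 2 - ‖t‖ ^ 2 - 1
          + Real.sqrt ((‖s‖ ^ 2 - ‖t‖ ^ 2 - 1) ^ 2
              + 4 * ‖s‖ ^ 2)) / 2 ∧
      0 < ‖s‖ /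
        ((‖s‖ ^ 2 - ‖t‖ ^ 2 - 1
          + Real.sqrt ((‖s‖ ^ 2 - ‖t‖ ^ 2 - 1) ^ 2
              + 4 * ‖s‖ ^ 2)) / 2) ∧
      ‖s‖ /
        ((‖s‖ ^ 2 - ‖t‖ ^ 2 - 1
          + Real.sqrt ((‖s‖ ^ 2 - ‖t‖ ^ 2 - 1) ^ 2
              + 4 * ‖s‖ ^ 2)) / 2) < 1 := by
  set A := ‖s‖ with hA
  set Bt := ‖t‖ with hBt
  have hBt0 : 0 ≤ Bt := norm_nonneg t
  have hA0 : 0 < A := by nlinarith [norm_nonneg s]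
  set Br : ℝ := A ^ 2 + Bt ^ 2 + 1 with hBr
  set d : ℝ := A ^ 2 - Bt ^ 2 - 1 with hd
  have hd0 : 0 < d := by rw [hd]; linarith
  set D : ℝ := d ^ 2 + 4 * A ^ 2 with hD
  have hD0 : 0 < D := by positivity
  set sq : ℝ := Real.sqrt D with hsqdef
  have hsq2 : sq ^ 2 = D := Real.sq_sqrt hD0.le
  have hsq0 : 0 < sq := Real.sqrt_pos.mpr hD0
  have hm : ‖s * t‖ = A * Bt := norm_mul s t
  have hBtA : Bt < A := by nlinarith
  have h4 : sq ^ 2 = Br ^ 2 - 4 * (A * Bt) ^ 2 := by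
    rw [hsq2, hD, hd, hBr]; ring
  have hB2m : 2 * (A * Bt) + 1 ≤ Br := by
    rw [hBr]; nlinarith [sq_nonneg (A - Bt)]
  -- main computation, for any solution γ with |γ| < 1
  have main : ∀ γ : ℂ, ‖γ‖ < 1 →
      (starRingEnd ℂ) (s * t) * γ ^ 2 + ((Br : ℝ) : ℂ) * γ + s * t = 0 →
      ((A ^ 2 : ℝ) : ℂ) + γ * (starRingEnd ℂ) (s * t) = (((d + sq) / 2 : ℝ) : ℂ) := by
    intro γ hγ heq
    have hcc : (starRingEnd ℂ) (s * t) * (s * t) = (((A * Bt) ^ 2 : ℝ) : ℂ) := by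
      rw [mul_comm, Complex.mul_conj, Complex.normSq_eq_norm_sq, hm]
    set x : ℂ := ((A ^ 2 : ℝ) : ℂ) + γ * (starRingEnd ℂ) (s * t) with hxdef
    have hsqc : ((sq : ℝ) : ℂ) ^ 2 = ((D : ℝ) : ℂ) := by exact_mod_cast congrArg (fun r : ℝ => (r : ℂ)) hsq2
    have hfac : (2 * x - (d : ℂ) - (sq : ℂ)) * (2 * x - (d : ℂ) + (sq : ℂ)) = 0 := by
      rw [hxdef]
      linear_combination (norm := (simp only [hD, hd, hBr]; push_cast; ring1))
        4 * (starRingEnd ℂ) (s * t) * heq - 4 * hcc - hsqc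
    have hrex : A ^ 2 - A * Bt ≤ x.re := by
      have h1 : ‖γ * (starRingEnd ℂ) (s * t)‖ ≤ A * Bt := by
        rw [norm_mul, Complex.norm_conj, hm]
        calc ‖γ‖ * (A * Bt) ≤ 1 * (A * Bt) := by
              apply mul_le_mul_of_nonneg_right hγ.le (by positivity)
          _ = A * Bt := one_mul _
      have h2 : -(A * Bt) ≤ (γ * (starRingEnd ℂ) (s * t)).re := by
        have := (abs_le.mp (Complex.abs_re_le_norm (γ * (starRingEnd ℂ) (s * t)))).1
        linarith
      rw [hxdef]
      simp only [Complex.add_re, Complex.ofReal_re]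
      linarith
    rcases mul_eq_zero.mp hfac with h | h
    · linear_combination (norm := (push_cast; ring1)) h / 2
    · exfalso
      have hxval : x = (((d - sq) / 2 : ℝ) : ℂ) := by
        linear_combination (norm := (push_cast; ring1)) h / 2
      have : x.re = (d - sq) / 2 := by rw [hxval, Complex.ofReal_re]
      have hdsq : d < sq := by nlinarith
      nlinarith [mul_lt_mul_of_pos_left hBtA hA0]
  -- the strict inequality A < (d+sq)/2
  have hlt : A < (d + sq) / 2 := by nlinarith [mul_pos hd0 hA0]
  have hX0 : 0 < (d + sq) / 2 := by linarith
  constructor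
  · -- existence and uniqueness
    by_cases hc0 : s * t = 0
    · refine ⟨0, ⟨by simp, by simp [hc0]⟩, ?_⟩
      rintro γ ⟨hγ1, hγ2⟩
      rw [hc0] at hγ2
      simp only [map_zero, zero_mul, add_zero, mul_zero, zero_add] at hγ2
      have hB0 : ((Br : ℝ) : ℂ) ≠ 0 := by
        simp only [ne_eq, Complex.ofReal_eq_zero]
        rw [hBr]; positivity
      rcases mul_eq_zero.mp hγ2 with h | h
      · exact absurd h hB0
      · exact h
    · have hm0 : 0 < A * Bt := by
        rcases lt_or_eq_of_le (mul_nonneg hA0.le hBt0) with h | h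
        · exact h
        · exfalso; apply hc0; rw [← norm_eq_zero, hm, ← h]
      have hcc : (starRingEnd ℂ) (s * t) * (s * t) = (((A * Bt) ^ 2 : ℝ) : ℂ) := by
        rw [mul_comm, Complex.mul_conj, Complex.normSq_eq_norm_sq, hm]
      have hBr0 : (0:ℝ) < Br := by rw [hBr]; positivity
      have hsqBr : sq < Br := by
        have hlt2 : sq ^ 2 < Br ^ 2 := by nlinarith [mul_pos hm0 hm0]
        exact lt_of_pow_lt_pow_left₀ 2 hBr0.le hlt2
      set r : ℝ := (sq - Br) / (2 * (A * Bt) ^ 2) with hr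
      set γ0 : ℂ := ((r : ℝ) : ℂ) * (s * t) with hγ0
      clear_value r γ0
      have hrmul : r * (2 * (A * Bt) ^ 2) = sq - Br := by
        rw [hr]; field_simp [ne_of_gt (by nlinarith : (0:ℝ) < Bt)]
      have hrid : r ^ 2 * (A * Bt) ^ 2 + Br * r + 1 = 0 := by
        have h44 : (r ^ 2 * (A * Bt) ^ 2 + Br * r + 1) * (4 * (A * Bt) ^ 2) = 0 := by
          linear_combination (r * (2 * (A * Bt) ^ 2) + sq + Br) * hrmul + h4
        rcases mul_eq_zero.mp h44 with h | h
        · exact h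
        · exact absurd h (by positivity)
      have hridC : ((r : ℝ) : ℂ) ^ 2 * (((A * Bt) ^ 2 : ℝ) : ℂ) + ((Br : ℝ) : ℂ) * ((r : ℝ) : ℂ) + 1 = 0 := by
        exact_mod_cast congrArg (fun y : ℝ => (y : ℂ)) hrid
      have heq0 : (starRingEnd ℂ) (s * t) * γ0 ^ 2 + ((Br : ℝ) : ℂ) * γ0 + s * t = 0 := by
        rw [hγ0]
        linear_combination (s * t) * hridC + ((r : ℝ) : ℂ) ^ 2 * (s * t) * hcc
      have habs' : 2 * (A * Bt) * ‖γ0‖ = Br - sq := by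
        have h1 : ‖γ0‖ = |r| * (A * Bt) := by
          rw [hγ0, norm_mul, Complex.norm_real, Real.norm_eq_abs, hm]
        rw [h1, hr, abs_div, abs_of_nonpos (by linarith : sq - Br ≤ 0),
          abs_of_pos (by positivity : (0:ℝ) < 2 * (A * Bt) ^ 2)]
        field_simp
        field_simp [ne_of_gt (by nlinarith : (0:ℝ) < Bt)]
        ring
      have hsqB2 : Br - 2 * (A * Bt) < sq := by nlinarith
      have habslt : ‖γ0‖ < 1 := by nlinarith [norm_nonneg γ0]
      refine ⟨γ0, ⟨habslt, heq0⟩, ?_⟩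
      rintro γ ⟨hγ1, hγ2⟩
      by_contra hne
      have hfac2 : (γ - γ0) * ((starRingEnd ℂ) (s * t) * (γ + γ0) + ((Br : ℝ) : ℂ)) = 0 := by
        linear_combination hγ2 - heq0
      have h2 : (starRingEnd ℂ) (s * t) * (γ + γ0) = -((Br : ℝ) : ℂ) := by
        rcases mul_eq_zero.mp hfac2 with h | h
        · exact absurd (sub_eq_zero.mp h) hne
        · linear_combination h
      have h5 : A * Bt * ‖γ + γ0‖ = Br := by
        have := congrArg norm h2
        rwa [norm_mul, Complex.norm_conj, hm, norm_neg, Complex.norm_real, Real.norm_eq_abs,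
          abs_of_pos (by rw [hBr]; positivity)] at this
      have h6 : ‖γ + γ0‖ ≤ ‖γ‖ + ‖γ0‖ := norm_add_le γ γ0
      nlinarith [mul_le_mul_of_nonneg_left h6 hm0.le, mul_lt_mul_of_pos_left hγ1 hm0,
        norm_nonneg (γ + γ0), norm_nonneg γ0]
  · intro γ hγ1 hγ2
    exact ⟨main γ hγ1 hγ2, hlt, div_pos hA0 hX0, (div_lt_one hX0).mpr hlt⟩
end

section
/- Let s, t ∈ ℂ with |s| > |t|, and let w ∈ ℂ satisfy s·t·w² = |s|·|t|·|w|². Then e^{−|w|²/2} · sup_{z∈ℂ} |K^{(s,t)}(z,w)|·e^{−|z|²/2} ≥ |s|^{−1/2} · exp( (1 + |t|² − |s|²)·|w|²/(2|s|·(|s|−|t|)) ). -/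
open MeasureTheory Real Filter
open scoped ENNReal

theorem stmt14 (s t : ℂ) (hst : ‖t‖ < ‖s‖) (w : ℂ)
    (hw : s * t * w ^ 2 = ((‖s‖ * ‖t‖ * ‖w‖ ^ 2 : ℝ) : ℂ)) :
    ENNReal.ofReal (‖s‖ ^ (-(1 : ℝ) / 2) *
        Real.exp ((1 + ‖t‖ ^ 2 - ‖s‖ ^ 2) * ‖w‖ ^ 2 /
          (2 * ‖s‖ * (‖s‖ - ‖t‖))))
      ≤ ⨆ z : ℂ, ENNReal.ofReal (Real.exp (-‖w‖ ^ 2 / 2) *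
          (‖Kst s t z w‖ * Real.exp (-‖z‖ ^ 2 / 2))) := by
  set ρ : ℝ := ‖s‖ with hρ
  set τ : ℝ := ‖t‖ with hτ
  set r : ℝ := ‖w‖ with hr
  have hτ0 : 0 ≤ τ := norm_nonneg t
  have hρ0 : 0 < ρ := lt_of_le_of_lt hτ0 hst
  have hd : 0 < ρ - τ := sub_pos.mpr hst
  have hs0 : s ≠ 0 := norm_ne_zero_iff.mp (hρ ▸ hρ0.ne')
  set z : ℂ := s * w / ((ρ * (ρ - τ) : ℝ) : ℂ) with hz
  refine le_trans ?_ (le_iSup _ z)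
  apply ENNReal.ofReal_le_ofReal
  -- compute abs z
  have hden : ((ρ * (ρ - τ) : ℝ) : ℂ) ≠ 0 := by
    exact_mod_cast (mul_pos hρ0 hd).ne'
  have habsz : ‖z‖ = r / (ρ - τ) := by
    rw [hz, norm_div, norm_mul, Complex.norm_real, Real.norm_eq_abs, abs_of_pos (mul_pos hρ0 hd)]
    field_simp
    ring
  -- conj hypothesis
  have hwc : (starRingEnd ℂ) s * (starRingEnd ℂ) t * ((starRingEnd ℂ) w) ^ 2
      = ((ρ * τ * r ^ 2 : ℝ) : ℂ) := by
    have := congrArg (starRingEnd ℂ) hw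
    simpa [map_mul, map_pow, Complex.conj_ofReal] using this
  have hss : s * (starRingEnd ℂ) s = ((ρ ^ 2 : ℝ) : ℂ) := by
    rw [Complex.mul_conj]
    push_cast [Complex.sq_norm, hρ]
    norm_cast
  have hww : w * (starRingEnd ℂ) w = ((r ^ 2 : ℝ) : ℂ) := by
    rw [Complex.mul_conj]
    push_cast [Complex.sq_norm, hr]
    norm_cast
  -- exponent is real
  set E : ℝ := τ * r ^ 2 / (2 * ρ * (ρ - τ) ^ 2) - τ * r ^ 2 / (2 * ρ) + r ^ 2 / (ρ * (ρ - τ))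
    with hE
  have hu : (t * z ^ 2 - (starRingEnd ℂ) t * ((starRingEnd ℂ) w) ^ 2
      + 2 * z * (starRingEnd ℂ) w) / (2 * s) = ((E : ℝ) : ℂ) := by
    have h2 : (2 : ℂ) * s ≠ 0 := by simp [hs0]
    push_cast at hw hwc hss hww
    have hρc : (ρ:ℂ) ≠ 0 := by exact_mod_cast hρ0.ne'
    have hdc : (ρ:ℂ) - (τ:ℂ) ≠ 0 := by
      rw [show ((ρ:ℂ) - (τ:ℂ)) = ((ρ - τ : ℝ) : ℂ) by push_cast; ring]
      exact_mod_cast hd.ne'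
    have ht2 : ((ρ:ℂ))^2 * ((starRingEnd ℂ) t * ((starRingEnd ℂ) w)^2)
        = s * ((ρ:ℂ)*(τ:ℂ)*(r:ℂ)^2) := by
      linear_combination s * hwc - ((starRingEnd ℂ) t * ((starRingEnd ℂ) w)^2) * hss
    have h1 : t * z ^ 2 = ((τ * r^2 / (ρ * (ρ-τ)^2) : ℝ) : ℂ) * s := by
      rw [hz]; push_cast; field_simp; linear_combination hw
    have h2' : (starRingEnd ℂ) t * ((starRingEnd ℂ) w) ^ 2
        = ((τ * r^2 / ρ : ℝ) : ℂ) * s := by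
      apply mul_left_cancel₀ (pow_ne_zero 2 hρc)
      rw [ht2]; push_cast; field_simp
    have h3 : 2 * z * (starRingEnd ℂ) w = ((2 * r^2 / (ρ * (ρ-τ)) : ℝ) : ℂ) * s := by
      rw [hz]; push_cast; field_simp; linear_combination hww
    have hER : τ * r^2 / (ρ * (ρ-τ)^2) - τ * r^2 / ρ + 2 * r^2 / (ρ * (ρ-τ)) = E * 2 := by
      rw [hE]
      have h1' := hρ0.ne'
      have h2'' := hd.ne'
      field_simp
    have hERC := congrArg (fun x : ℝ => (x : ℂ)) hER
    rw [h1, h2', h3, div_eq_iff h2]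
    push_cast at hERC ⊢
    linear_combination s * hERC
  -- abs of kernel
  have habsK : ‖Kst s t z w‖ = (ρ ^ ((1:ℝ)/2))⁻¹ * Real.exp E := by
    rw [Kst, norm_mul, norm_inv, hu, Complex.norm_exp]
    simp only [Complex.ofReal_re]
    congr 1
    rw [csqrt]
    have : ((1:ℂ)/2) = (((1:ℝ)/2 : ℝ) : ℂ) := by norm_num
    rw [this, Complex.norm_cpow_real]
  rw [habsK, habsz]
  rw [show (-(1:ℝ)/2) = -((1:ℝ)/2) by norm_num, Real.rpow_neg hρ0.le]
  apply le_of_eq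
  have hexp : (1 + τ^2 - ρ^2) * r^2 / (2*ρ*(ρ-τ)) = -r^2/2 + (E + -(r/(ρ-τ))^2/2) := by
    rw [hE]; field_simp; ring
  rw [hexp, Real.exp_add, Real.exp_add]
  ring
end
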